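/- Let J, K ⊆ {1,…,n−1}, and let W_J, W_K ≤ S_n be the standard parabolic subgroups generated by {s_i : i ∈ J} and {s_i : i ∈ K} respectively. Let τ, φ ∈ S_n, let τ̂ be the maximal element of the coset τW_J in the Bruhat order, and let φ̃ be the minimal element of the coset φW_K in the Bruhat order. Then the set W_J I(τ^{−1}) φ W_K = {a u φ b : a ∈ W_J, u ∈ S_n with u ≤ τ^{−1}, b ∈ W_K} has a unique minimal element with respect to the Bruhat order, and this minimal element equals (τ̂^{−1} * (φ̃ w_0))·w_0, where * is the Demazure product. -/

import Mathlib

open scoped Classical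

namespace KK

/-- The simple transposition `s_j = (j, j+1)` in `S_n` (1-indexed letters `1 ≤ j ≤ n-1`);
junk value `1` out of range. -/
def simpleRefl (n : ℕ) (j : ℕ) : Equiv.Perm (Fin n) :=
  if h : 1 ≤ j ∧ j ≤ n - 1 then
    Equiv.swap ⟨j - 1, by omega⟩ ⟨j, by omega⟩
  else 1

/-- The permutation represented by a word in the simple transpositions. -/
def wordProd (n : ℕ) (l : List ℕ) : Equiv.Perm (Fin n) :=
  (l.map (simpleRefl n)).prod

/-- Coxeter length: minimal length of a word in simple transpositions representing `w`. -/
noncomputable def len (n : ℕ) (w : Equiv.Perm (Fin n)) : ℕ :=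
  sInf {k | ∃ l : List ℕ, (∀ j ∈ l, 1 ≤ j ∧ j ≤ n - 1) ∧ l.length = k ∧ wordProd n l = w}

/-- A word is reduced if its letters are genuine simple-transposition indices and its
length equals the Coxeter length of the permutation it represents. -/
def IsReduced (n : ℕ) (l : List ℕ) : Prop :=
  (∀ j ∈ l, 1 ≤ j ∧ j ≤ n - 1) ∧ len n (wordProd n l) = l.length

/-- Bruhat order on `S_n`: `u ≤ w` iff some reduced word for `w` contains a reduced word
for `u` as a subword. -/
def bruhatLE (n : ℕ) (u w : Equiv.Perm (Fin n)) : Prop :=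
  ∃ l l' : List ℕ, IsReduced n l ∧ wordProd n l = w ∧
    l'.Sublist l ∧ IsReduced n l' ∧ wordProd n l' = u

/-- `m` is the greatest element of `K` in the Bruhat order (hence the unique maximal one). -/
def IsBruhatGreatest (n : ℕ) (K : Set (Equiv.Perm (Fin n))) (m : Equiv.Perm (Fin n)) : Prop :=
  m ∈ K ∧ ∀ u ∈ K, bruhatLE n u m

/-- `m` is the least element of `K` in the Bruhat order (hence the unique minimal one). -/
def IsBruhatLeast (n : ℕ) (K : Set (Equiv.Perm (Fin n))) (m : Equiv.Perm (Fin n)) : Prop :=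
  m ∈ K ∧ ∀ u ∈ K, bruhatLE n m u

/-- One step of the Demazure product: `w * s_j = max {w, w s_j}` in the Bruhat order. -/
noncomputable def demStep (n : ℕ) (w : Equiv.Perm (Fin n)) (j : ℕ) : Equiv.Perm (Fin n) :=
  if len n w < len n (w * simpleRefl n j) then w * simpleRefl n j else w

/-- The Demazure product `*(w)` of a (not necessarily reduced) word. -/
noncomputable def demProd (n : ℕ) (l : List ℕ) : Equiv.Perm (Fin n) :=
  l.foldl (demStep n) 1

/-- The binary Demazure product of two permutations, `w * w' = max I(w)I(w')`. -/
noncomputable def demMul (n : ℕ) (w w' : Equiv.Perm (Fin n)) : Equiv.Perm (Fin n) :=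
  if h : ∃ m, IsBruhatGreatest n
      {x | ∃ u v, bruhatLE n u w ∧ bruhatLE n v w' ∧ x = u * v} m
  then h.choose else 1

/-- The longest element `w₀` of `S_n`. -/
def w0 (n : ℕ) : Equiv.Perm (Fin n) := Fin.revPerm



/-- `μ` is a partition with `n` nonnegative integer parts `μ 1 ≥ ⋯ ≥ μ n ≥ 0`. -/
def IsPartition (n : ℕ) (μ : ℕ → ℤ) : Prop :=
  (∀ i, 1 ≤ i → i < n → μ (i + 1) ≤ μ i) ∧ 0 ≤ μ n

/-- `(i, j)` indexes an entry strictly below the top in the triangular array: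
`n ≥ i > j ≥ 1`. -/
def inTriangle (n : ℕ) (p : ℕ × ℕ) : Prop := 1 ≤ p.2 ∧ p.2 < p.1 ∧ p.1 ≤ n

/-- A Gelfand–Tsetlin pattern of size `n`, encoded as a function `a : ℕ → ℕ → ℝ`
(value `a i j` for `n ≥ i ≥ j ≥ 1`, and `0` outside the triangle). -/
def IsGTArray (n : ℕ) (a : ℕ → ℕ → ℝ) : Prop :=
  (∀ i j, 1 ≤ j → j < i → i ≤ n →
      0 ≤ a i j - a (i - 1) j ∧ 0 ≤ a (i - 1) j - a i (j + 1)) ∧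
  (∀ i j, j = 0 ∨ i < j ∨ n < i → a i j = 0)

/-- The Gelfand–Tsetlin polytope `GT(μ)`: GT patterns of size `n` with bottom row `μ`. -/
def GTset (n : ℕ) (μ : ℕ → ℤ) : Set (ℕ → ℕ → ℝ) :=
  {a | IsGTArray n a ∧ ∀ j, 1 ≤ j → j ≤ n → a n j = (μ j : ℝ)}

/-- The integral points `GT_ℤ(μ)` of the Gelfand–Tsetlin polytope. -/
def GTZ (n : ℕ) (μ : ℕ → ℤ) : Set (ℕ → ℕ → ℝ) :=
  {a ∈ GTset n μ | ∀ i j, ∃ m : ℤ, a i j = (m : ℝ)}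

/-- The weight of a GT pattern: `wt a i = Σ_{j=1}^i a i j − Σ_{j=1}^{i-1} a (i-1) j`. -/
noncomputable def wt (a : ℕ → ℕ → ℝ) (i : ℕ) : ℝ :=
  (∑ j ∈ Finset.Icc 1 i, a i j) - ∑ j ∈ Finset.Icc 1 (i - 1), a (i - 1) j

/-- The pairs `(i,j)` with `n ≥ i > j ≥ 1` in increasing lexicographic order. -/
def pairsLex (n : ℕ) : List (ℕ × ℕ) :=
  (List.range' 2 (n - 1)).flatMap fun i => (List.range' 1 (i - 1)).map fun j => (i, j)

/-- The pairs `(i,j)` with `n ≥ i > j ≥ 1` in increasing order for the total order in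
which `(i,j)` precedes `(i',j')` iff `i < i'`, or `i = i'` and `j > j'`. -/
def pairsBar (n : ℕ) : List (ℕ × ℕ) :=
  (List.range' 2 (n - 1)).flatMap fun i => ((List.range' 1 (i - 1)).reverse).map fun j => (i, j)

/-- The pairs `(i,j)` with `n ≥ i > j ≥ 1` in decreasing order for the total order in
which `(i,j)` precedes `(i',j')` iff `i < i'`, or `i = i'` and `j > j'`:
`i` descending and, within each `i`, `j` ascending. -/
def pairsFin (n : ℕ) : List (ℕ × ℕ) :=
  ((List.range' 2 (n - 1)).reverse).flatMap fun i => (List.range' 1 (i - 1)).map fun j => (i, j)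

/-- The word `𝔣(P)`: list the pairs `(i,j)` with `a (i-1) j = a i (j+1)` in the order of
`pairsFin` and record the letter `j` for each. -/
noncomputable def fWord (n : ℕ) (a : ℕ → ℕ → ℝ) : List ℕ :=
  ((pairsFin n).filter fun p => a (p.1 - 1) p.2 = a p.1 (p.2 + 1)).map fun p => p.2

/-- The word `𝔦(Q)`: list the pairs `(i,j)` with `b i j = b (i-1) j` in increasing
lexicographic order and record the letter `i - j` for each. -/
noncomputable def iWord (n : ℕ) (b : ℕ → ℕ → ℝ) : List ℕ :=
  ((pairsLex n).filter fun p => b p.1 p.2 = b (p.1 - 1) p.2).map fun p => p.1 - p.2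



/-- The sequence `d_t`, `1 ≤ t ≤ i+1`, used to define the crystal operators `e_i, f_i`
(with the convention `a_{k,k+1} = 0` for `k ∈ {i-1, i}`). -/
noncomputable def dseq (a : ℕ → ℕ → ℝ) (i : ℕ) : ℕ → ℝ
  | 0 => 0
  | 1 => a i 1 - a (i + 1) 1
  | (t + 2) => dseq a i (t + 1) + a i (t + 1) + (if t + 2 = i + 1 then 0 else a i (t + 2))
      - (if t + 1 = i then 0 else a (i - 1) (t + 1)) - a (i + 1) (t + 2)

/-- `d = min {d_1, …, d_{i+1}}`. -/
noncomputable def dmin (a : ℕ → ℕ → ℝ) (i : ℕ) : ℝ :=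
  ((Finset.Icc 1 (i + 1)).image (dseq a i)).min'
    (Finset.Nonempty.image ⟨1, by simp⟩ _)

/-- `m`: the smallest index `t ∈ [1, i+1]` with `d_t = d`. -/
noncomputable def mIdx (a : ℕ → ℕ → ℝ) (i : ℕ) : ℕ :=
  sInf {t | t ∈ Finset.Icc 1 (i + 1) ∧ dseq a i t = dmin a i}

/-- `M`: the largest index `t ∈ [1, i+1]` with `d_t = d`. -/
noncomputable def MIdx (a : ℕ → ℕ → ℝ) (i : ℕ) : ℕ :=
  sSup {t | t ∈ Finset.Icc 1 (i + 1) ∧ dseq a i t = dmin a i}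

/-- The raising crystal operator `e_i` (`none` plays the role of `0`). -/
noncomputable def eOp (i : ℕ) (a : ℕ → ℕ → ℝ) : Option (ℕ → ℕ → ℝ) :=
  if dmin a i = 0 then none
  else some fun i' j' => if i' = i ∧ j' = mIdx a i then a i' j' + 1 else a i' j'

/-- The lowering crystal operator `f_i` (`none` plays the role of `0`). -/
noncomputable def fOp (i : ℕ) (a : ℕ → ℕ → ℝ) : Option (ℕ → ℕ → ℝ) :=
  if MIdx a i = i + 1 then none
  else some fun i' j' => if i' = i ∧ j' = MIdx a i then a i' j' - 1 else a i' j'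

/-- `m`-fold iteration of a partial operator. -/
noncomputable def iterOp (op : (ℕ → ℕ → ℝ) → Option (ℕ → ℕ → ℝ)) :
    ℕ → (ℕ → ℕ → ℝ) → Option (ℕ → ℕ → ℝ)
  | 0 => fun x => some x
  | (m + 1) => fun x => (op x).bind (iterOp op m)

/-- Apply `op i₁ ^ m₁ ∘ ⋯ ∘ op i_k ^ m_k` to `x`, given the list `[(i₁,m₁),…,(i_k,m_k)]`
(the last pair acts first). -/
noncomputable def applyWord (op : ℕ → (ℕ → ℕ → ℝ) → Option (ℕ → ℕ → ℝ)) :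
    List (ℕ × ℕ) → (ℕ → ℕ → ℝ) → Option (ℕ → ℕ → ℝ)
  | [] => fun x => some x
  | (p :: rest) => fun x => (applyWord op rest x).bind (iterOp (op p.1) p.2)

/-- The highest-weight element `G⁰_μ` of `GT_ℤ(μ)`: the element killed by every `e_i`. -/
noncomputable def G0 (n : ℕ) (μ : ℕ → ℤ) : ℕ → ℕ → ℝ :=
  if h : ∃ P, P ∈ GTZ n μ ∧ ∀ i, 1 ≤ i → i ≤ n - 1 → eOp i P = none then h.choose else 0

/-- The lowest-weight element `G*_μ` of `GT_ℤ(μ)`: the element killed by every `f_i`. -/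
noncomputable def Gstar (n : ℕ) (μ : ℕ → ℤ) : ℕ → ℕ → ℝ :=
  if h : ∃ P, P ∈ GTZ n μ ∧ ∀ i, 1 ≤ i → i ≤ n - 1 → fOp i P = none then h.choose else 0

/-- The Demazure crystal `D(μ, w)` computed from the reduced word `l` for `w`:
`{f_{i₁}^{m₁} ⋯ f_{i_k}^{m_k}(G⁰_μ)} ∩ GT_ℤ(μ)`. -/
noncomputable def demCrystal (n : ℕ) (μ : ℕ → ℤ) (l : List ℕ) : Set (ℕ → ℕ → ℝ) :=
  {P | P ∈ GTZ n μ ∧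
    ∃ ms : List ℕ, ms.length = l.length ∧ applyWord fOp (l.zip ms) (G0 n μ) = some P}

/-- The opposite Demazure crystal `D(μ, w)^op` computed from the reduced word `l`
for `w·w₀`: `{e_{j₁}^{m₁} ⋯ e_{j_t}^{m_t}(G*_μ)} ∩ GT_ℤ(μ)`. -/
noncomputable def opDemCrystal (n : ℕ) (μ : ℕ → ℤ) (l : List ℕ) : Set (ℕ → ℕ → ℝ) :=
  {P | P ∈ GTZ n μ ∧
    ∃ ms : List ℕ, ms.length = l.length ∧ applyWord eOp (l.zip ms) (Gstar n μ) = some P}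

/-- `σ(F)`: the product of `s_{i-j}` over `(i,j) ∈ F` in increasing lexicographic order. -/
noncomputable def sigmaF (n : ℕ) (F : Finset (ℕ × ℕ)) : Equiv.Perm (Fin n) :=
  wordProd n (((pairsLex n).filter fun p => p ∈ F).map fun p => p.1 - p.2)

/-- `σ̄(F)`: the product of `s_j` over `(i,j) ∈ F` in increasing order for the total
order in which `(i,j)` precedes `(i',j')` iff `i < i'`, or `i = i'` and `j > j'`. -/
noncomputable def sigmaBarF (n : ℕ) (F : Finset (ℕ × ℕ)) : Equiv.Perm (Fin n) :=
  wordProd n (((pairsBar n).filter fun p => p ∈ F).map fun p => p.2)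

/-- The Kogan face `K(μ, F)`: the face of `GT(μ)` cut out by `a i j = a (i-1) j`,
`(i,j) ∈ F`. -/
def KoganFace (n : ℕ) (μ : ℕ → ℤ) (F : Finset (ℕ × ℕ)) : Set (ℕ → ℕ → ℝ) :=
  {a ∈ GTset n μ | ∀ p ∈ F, a p.1 p.2 = a (p.1 - 1) p.2}

/-- The dual Kogan face `K̄(μ, F)`: the face of `GT(μ)` cut out by
`a (i-1) j = a i (j+1)`, `(i,j) ∈ F`. -/
def dualKoganFace (n : ℕ) (μ : ℕ → ℤ) (F : Finset (ℕ × ℕ)) : Set (ℕ → ℕ → ℝ) :=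
  {a ∈ GTset n μ | ∀ p ∈ F, a (p.1 - 1) p.2 = a p.1 (p.2 + 1)}

/-- The BiKogan face `K_{λ,μ}(F, F')` of `GT(λ) × GT(μ)`. -/
def biKoganFace (n : ℕ) (lam μ : ℕ → ℤ) (F F' : Finset (ℕ × ℕ)) :
    Set ((ℕ → ℕ → ℝ) × (ℕ → ℕ → ℝ)) :=
  {PQ | PQ.1 ∈ GTset n lam ∧ PQ.2 ∈ GTset n μ ∧
    (∀ p ∈ F, PQ.1 (p.1 - 1) p.2 = PQ.1 p.1 (p.2 + 1)) ∧
    (∀ p ∈ F', PQ.2 p.1 p.2 = PQ.2 (p.1 - 1) p.2)}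

/-- `ϖ(F, F') = σ̄(F)⁻¹ · σ(F')`. -/
noncomputable def biVarpi (n : ℕ) (F F' : Finset (ℕ × ℕ)) : Equiv.Perm (Fin n) :=
  (sigmaBarF n F)⁻¹ * sigmaF n F'

/-- The BiKogan face `K_{λ,μ}(F, F')` is reduced if `ℓ(ϖ(F,F')) = |F| + |F'|`. -/
def biKoganReduced (n : ℕ) (F F' : Finset (ℕ × ℕ)) : Prop :=
  len n (biVarpi n F F') = F.card + F'.card


/-! ### Auxiliary development: basics -/

section Aux
open Equiv Finset

variable {n : ℕ}

/-- Valid letters for `S_n`. -/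
def Valid (n : ℕ) (l : List ℕ) : Prop := ∀ j ∈ l, 1 ≤ j ∧ j ≤ n - 1

lemma simpleRefl_mul_self (j : ℕ) : simpleRefl n j * simpleRefl n j = 1 := by
  unfold simpleRefl; split
  · exact Equiv.swap_mul_self _ _
  · exact one_mul 1

lemma wordProd_nil : wordProd n [] = 1 := rfl

lemma wordProd_append (l l' : List ℕ) :
    wordProd n (l ++ l') = wordProd n l * wordProd n l' := by
  unfold wordProd; rw [List.map_append, List.prod_append]

lemma wordProd_singleton (j : ℕ) : wordProd n [j] = simpleRefl n j := by
  simp [wordProd]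

lemma wordProd_concat (l : List ℕ) (j : ℕ) :
    wordProd n (l ++ [j]) = wordProd n l * simpleRefl n j := by
  rw [wordProd_append, wordProd_singleton]

lemma wordProd_cons (j : ℕ) (l : List ℕ) :
    wordProd n (j :: l) = simpleRefl n j * wordProd n l := by
  simp [wordProd]

/-- The counting function underlying the dominance characterization of Bruhat order. -/
def dcnt (w : Equiv.Perm (Fin n)) : ℕ → ℕ → ℕ
  | 0, _ => 0
  | (i+1), j => dcnt w i j + if h : i < n then (if j ≤ (w ⟨i, h⟩).val then 1 else 0) else 0

lemma dcnt_succ (w : Equiv.Perm (Fin n)) (i j : ℕ) (h : i < n) :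
    dcnt w (i+1) j = dcnt w i j + (if j ≤ (w ⟨i, h⟩).val then 1 else 0) := by
  simp only [dcnt, dif_pos h]

lemma dcnt_succ_of_ge (w : Equiv.Perm (Fin n)) (i j : ℕ) (h : n ≤ i) :
    dcnt w (i+1) j = dcnt w i j := by
  simp only [dcnt, dif_neg (not_lt.mpr h), add_zero]

lemma dcnt_stable (w : Equiv.Perm (Fin n)) {i : ℕ} (j : ℕ) (h : n ≤ i) :
    dcnt w i j = dcnt w n j := by
  induction i with
  | zero => have : n = 0 := Nat.le_zero.mp h; subst this; rfl
  | succ i ih =>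
    rcases Nat.lt_or_ge i n with h'|h'
    · have : n = i + 1 := by omega
      subst this; rfl
    · rw [dcnt_succ_of_ge w i j h', ih h']

lemma dcnt_eq_card (w : Equiv.Perm (Fin n)) (i j : ℕ) :
    dcnt w i j = (Finset.univ.filter fun a : Fin n => a.val < i ∧ j ≤ (w a).val).card := by
  induction i with
  | zero => simp [dcnt]
  | succ i ih =>
    rcases Nat.lt_or_ge i n with h|h
    · rw [dcnt_succ w i j h, ih]
      have hsplit : (Finset.univ.filter fun a : Fin n => a.val < i + 1 ∧ j ≤ (w a).val)
          = (Finset.univ.filter fun a : Fin n => a.val < i ∧ j ≤ (w a).val) ∪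
            (Finset.univ.filter fun a : Fin n => a.val = i ∧ j ≤ (w a).val) := by
        ext a; simp only [Finset.mem_filter, Finset.mem_union, Finset.mem_univ, true_and]
        constructor
        · rintro ⟨h1, h2⟩; rcases Nat.lt_or_ge a.val i with h3|h3
          · exact Or.inl ⟨h3, h2⟩
          · exact Or.inr ⟨by omega, h2⟩
        · rintro (⟨h1, h2⟩|⟨h1, h2⟩) <;> exact ⟨by omega, h2⟩
      rw [hsplit, Finset.card_union_of_disjoint]
      · congr 1
        by_cases hj : j ≤ (w ⟨i, h⟩).val
        · rw [if_pos hj]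
          have : (Finset.univ.filter fun a : Fin n => a.val = i ∧ j ≤ (w a).val) = {⟨i, h⟩} := by
            ext a; simp only [Finset.mem_filter, Finset.mem_univ, true_and, Finset.mem_singleton]
            constructor
            · rintro ⟨h1, _⟩; exact Fin.ext h1
            · rintro rfl; exact ⟨rfl, hj⟩
          rw [this, Finset.card_singleton]
        · rw [if_neg hj]
          have : (Finset.univ.filter fun a : Fin n => a.val = i ∧ j ≤ (w a).val) = ∅ := by
            ext a; simp only [Finset.mem_filter, Finset.mem_univ, true_and,
              Finset.notMem_empty, iff_false, not_and]
            intro h1; have : a = ⟨i, h⟩ := Fin.ext h1; rw [this]; exact hj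
          rw [this, Finset.card_empty]
      · rw [Finset.disjoint_left]
        intro a ha hb
        simp only [Finset.mem_filter] at ha hb
        omega
    · rw [dcnt_succ_of_ge w i j h, ih]
      congr 1; ext a
      simp only [Finset.mem_filter]
      constructor
      · rintro ⟨h1, h2, h3⟩; exact ⟨h1, by omega, h3⟩
      · rintro ⟨h1, h2, h3⟩; exact ⟨h1, by omega, h3⟩

end Aux
section Aux2
open Equiv Finset

/-- The adjacent transposition at positions `p`, `p+1` (0-indexed). -/
def swP (n p : ℕ) (h : p + 1 < n) : Equiv.Perm (Fin n) :=
  Equiv.swap ⟨p, by omega⟩ ⟨p+1, h⟩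

variable {n : ℕ}

lemma swP_mul_self (p : ℕ) (h : p + 1 < n) : swP n p h * swP n p h = 1 :=
  Equiv.swap_mul_self _ _

lemma simpleRefl_eq_swP {j : ℕ} (h1 : 1 ≤ j) (h2 : j ≤ n - 1) :
    simpleRefl n j = swP n (j-1) (by omega) := by
  unfold simpleRefl swP
  rw [dif_pos ⟨h1, h2⟩]
  have e : (⟨j, by omega⟩ : Fin n) = ⟨j - 1 + 1, by omega⟩ :=
    Fin.ext (by show j = j - 1 + 1; omega)
  rw [e]

lemma swP_val (p : ℕ) (h : p + 1 < n) (x : Fin n) :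
    ((swP n p h) x).val = if x.val = p then p+1 else if x.val = p+1 then p else x.val := by
  unfold swP
  rcases eq_or_ne x ⟨p, by omega⟩ with rfl | hx
  · rw [Equiv.swap_apply_left]; simp
  · rcases eq_or_ne x ⟨p+1, h⟩ with rfl | hx'
    · rw [Equiv.swap_apply_right]
      show p = if p + 1 = p then p + 1 else if p + 1 = p + 1 then p else p + 1
      rw [if_neg (by omega), if_pos rfl]
    · rw [Equiv.swap_apply_of_ne_of_ne hx hx']
      have h1 : x.val ≠ p := fun hc => hx (Fin.ext hc)
      have h2 : x.val ≠ p + 1 := fun hc => hx' (Fin.ext hc)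
      rw [if_neg h1, if_neg h2]

lemma swP_lt_of_lt {p : ℕ} {h : p + 1 < n} {a b : Fin n} (hab : a < b)
    (hne : ¬(a.val = p ∧ b.val = p + 1)) : swP n p h a < swP n p h b := by
  have ha := swP_val p h a
  have hb := swP_val p h b
  rw [Fin.lt_def] at hab ⊢
  rw [Decidable.not_and_iff_or_not] at hne
  rcases hne with h1 | h1 <;> split_ifs at ha hb <;> omega

/-- The set of inversions of a permutation. -/
def invSet {n : ℕ} (w : Equiv.Perm (Fin n)) : Finset (Fin n × Fin n) :=
  Finset.univ.filter fun q => q.1 < q.2 ∧ w q.2 < w q.1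

/-- The number of inversions. -/
def invc {n : ℕ} (w : Equiv.Perm (Fin n)) : ℕ := (invSet w).card

lemma invc_one : invc (1 : Equiv.Perm (Fin n)) = 0 := by
  unfold invc invSet
  rw [Finset.card_eq_zero]
  ext q
  simp only [Finset.mem_filter, Finset.mem_univ, true_and, Finset.notMem_empty, iff_false,
    not_and, Equiv.Perm.one_apply]
  intro h1; have h2 := (Finset.mem_filter.mp h1).2; exact absurd h2.1 (not_lt.mpr h2.2.le)

lemma mul_swP_apply (w : Equiv.Perm (Fin n)) (p : ℕ) (h : p + 1 < n) (a : Fin n) :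
    (w * swP n p h) a = w (swP n p h a) := rfl

lemma swP_swP (p : ℕ) (h : p + 1 < n) (a : Fin n) : swP n p h (swP n p h a) = a := by
  unfold swP; exact Equiv.swap_apply_self _ _ _

/-- Key step lemma: right multiplication by an adjacent transposition changes the
inversion number by exactly one. -/
lemma invc_mul_swP (w : Equiv.Perm (Fin n)) (p : ℕ) (h : p + 1 < n) :
    (w ⟨p, by omega⟩ < w ⟨p+1, h⟩ ∧ invc (w * swP n p h) = invc w + 1) ∨
    (w ⟨p+1, h⟩ < w ⟨p, by omega⟩ ∧ invc w = invc (w * swP n p h) + 1) := by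
  set P : Fin n := ⟨p, by omega⟩ with hP
  set Q : Fin n := ⟨p+1, h⟩ with hQ
  set s := swP n p h with hs
  have hsP : s P = Q := Equiv.swap_apply_left _ _
  have hsQ : s Q = P := Equiv.swap_apply_right _ _
  have hPQ : P < Q := by rw [hP, hQ]; exact Fin.mk_lt_mk.mpr (Nat.lt_succ_self p)
  -- the bijection on the erased sets
  have hcard : ((invSet (w * s)).erase (P, Q)).card = ((invSet w).erase (P, Q)).card := by
    apply Finset.card_nbij' (fun q => (s q.1, s q.2)) (fun q => (s q.1, s q.2))
    · intro q hq
      simp only [Finset.mem_coe, Finset.mem_erase, Finset.mem_filter, Finset.mem_univ, true_and,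
        invSet] at hq ⊢
      obtain ⟨hne, hlt, hinv⟩ := hq
      have hne' : ¬(q.1.val = p ∧ q.2.val = p + 1) := by
        rintro ⟨e1, e2⟩
        exact hne (Prod.ext (Fin.ext e1) (Fin.ext e2))
      refine ⟨?_, swP_lt_of_lt hlt hne', ?_⟩
      · rintro he
        have e1 : s q.1 = P := congrArg Prod.fst he
        have e2 : s q.2 = Q := congrArg Prod.snd he
        have : q.1 = s P := by rw [← e1, swP_swP]
        have h2 : q.2 = s Q := by rw [← e2, swP_swP]
        rw [hsP] at this; rw [hsQ] at h2
        rw [this, h2] at hlt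
        exact absurd hPQ (not_lt.mpr hlt.le)
      · simpa [mul_swP_apply] using hinv
    · intro q hq
      simp only [Finset.mem_coe, Finset.mem_erase, Finset.mem_filter, Finset.mem_univ, true_and,
        invSet] at hq ⊢
      obtain ⟨hne, hlt, hinv⟩ := hq
      have hne' : ¬(q.1.val = p ∧ q.2.val = p + 1) := by
        rintro ⟨e1, e2⟩
        exact hne (Prod.ext (Fin.ext e1) (Fin.ext e2))
      refine ⟨?_, swP_lt_of_lt hlt hne', ?_⟩
      · rintro he
        have e1 : s q.1 = P := congrArg Prod.fst he
        have e2 : s q.2 = Q := congrArg Prod.snd he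
        have h1 : q.1 = s P := by rw [← e1, swP_swP]
        have h2 : q.2 = s Q := by rw [← e2, swP_swP]
        rw [hsP] at h1; rw [hsQ] at h2
        rw [h1, h2] at hlt
        exact absurd hPQ (not_lt.mpr hlt.le)
      · rw [mul_swP_apply, mul_swP_apply, swP_swP, swP_swP]
        exact hinv
    · intro q hq; exact Prod.ext (swP_swP _ _ _) (swP_swP _ _ _)
    · intro q hq; exact Prod.ext (swP_swP _ _ _) (swP_swP _ _ _)
  have hmem1 : (P, Q) ∈ invSet (w * s) ↔ w P < w Q := by
    simp only [invSet, Finset.mem_filter, Finset.mem_univ, true_and]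
    rw [mul_swP_apply, mul_swP_apply, hsP, hsQ]
    exact ⟨fun h => h.2, fun h => ⟨hPQ, h⟩⟩
  have hmem2 : (P, Q) ∈ invSet w ↔ w Q < w P := by
    simp only [invSet, Finset.mem_filter, Finset.mem_univ, true_and]
    exact ⟨fun h => h.2, fun h => ⟨hPQ, h⟩⟩
  have htri : w P < w Q ∨ w Q < w P := by
    rcases lt_trichotomy (w P) (w Q) with h1|h1|h1
    · exact Or.inl h1
    · exfalso
      have hc := w.injective h1
      have hpp : p = p + 1 := congrArg Fin.val hc
      omega
    · exact Or.inr h1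
  rcases htri with h1|h1
  · left; refine ⟨h1, ?_⟩
    have m1 : (P, Q) ∈ invSet (w * s) := hmem1.mpr h1
    have m2 : (P, Q) ∉ invSet w := fun hc => absurd h1 (not_lt.mpr (hmem2.mp hc).le)
    have e1 : ((invSet (w * s)).erase (P, Q)).card = invc (w * s) - 1 :=
      by rw [Finset.card_erase_of_mem m1]; rfl
    have e2 : ((invSet w).erase (P, Q)).card = invc w :=
      by rw [Finset.erase_eq_of_notMem m2]; rfl
    have hpos : 1 ≤ invc (w * s) := Finset.card_pos.mpr ⟨_, m1⟩
    omega
  · right; refine ⟨h1, ?_⟩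
    have m1 : (P, Q) ∉ invSet (w * s) := fun hc => absurd h1 (not_lt.mpr (hmem1.mp hc).le)
    have m2 : (P, Q) ∈ invSet w := hmem2.mpr h1
    have e1 : ((invSet (w * s)).erase (P, Q)).card = invc (w * s) :=
      by rw [Finset.erase_eq_of_notMem m1]; rfl
    have e2 : ((invSet w).erase (P, Q)).card = invc w - 1 :=
      by rw [Finset.card_erase_of_mem m2]; rfl
    have hpos : 1 ≤ invc w := Finset.card_pos.mpr ⟨_, m2⟩
    omega

end Aux2
theorem Equiv.Perm.apply_inv_self {α : Type*} (f : Equiv.Perm α) (x : α) : f (f⁻¹ x) = x :=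
  f.apply_symm_apply x

theorem Equiv.Perm.inv_apply_self {α : Type*} (f : Equiv.Perm α) (x : α) : f⁻¹ (f x) = x :=
  f.symm_apply_apply x

section Aux3
open Equiv Finset

variable {n : ℕ}

lemma invc_mul_simpleRefl (w : Equiv.Perm (Fin n)) {j : ℕ} (h1 : 1 ≤ j) (h2 : j ≤ n - 1) :
    invc (w * simpleRefl n j) = invc w + 1 ∨ invc w = invc (w * simpleRefl n j) + 1 := by
  rw [simpleRefl_eq_swP h1 h2]
  rcases invc_mul_swP w (j-1) (by omega) with ⟨_, h⟩ | ⟨_, h⟩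
  · exact Or.inl h
  · exact Or.inr h

lemma strictMono_le_apply' {w : Equiv.Perm (Fin n)} (hw : StrictMono w) :
    ∀ v (hv : v < n), v ≤ (w ⟨v, hv⟩).val := by
  intro v
  induction v with
  | zero => intro _; exact Nat.zero_le _
  | succ v ih =>
    intro hv
    have hvn : v < n := by omega
    have hlt : (⟨v, hvn⟩ : Fin n) < ⟨v+1, hv⟩ := Fin.mk_lt_mk.mpr (Nat.lt_succ_self v)
    have h2 := hw hlt
    rw [Fin.lt_def] at h2
    have := ih hvn
    omega

lemma strictMono_eq_one {w : Equiv.Perm (Fin n)} (hw : StrictMono w) : w = 1 := by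
  have hinv : StrictMono (w⁻¹ : Equiv.Perm (Fin n)) := by
    intro a b hab
    rcases lt_trichotomy (w⁻¹ a) (w⁻¹ b) with h|h|h
    · exact h
    · exfalso; rw [(w⁻¹ : Equiv.Perm (Fin n)).injective h] at hab; exact lt_irrefl _ hab
    · exfalso
      have h3 := hw h
      rw [Equiv.Perm.apply_inv_self, Equiv.Perm.apply_inv_self] at h3
      exact absurd hab (not_lt.mpr h3.le)
  apply Equiv.ext
  intro a
  have h1 : a.val ≤ (w a).val := strictMono_le_apply' hw a.val a.isLt
  have h2 : (w a).val ≤ (w⁻¹ (w a)).val := strictMono_le_apply' hinv (w a).val (w a).isLt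
  rw [Equiv.Perm.inv_apply_self] at h2
  simp only [Equiv.Perm.one_apply]
  exact Fin.ext (by omega)

lemma exists_descent {w : Equiv.Perm (Fin n)} (hw : w ≠ 1) :
    ∃ p, ∃ h : p + 1 < n, w ⟨p+1, h⟩ < w ⟨p, by omega⟩ := by
  by_contra hc
  push_neg at hc
  have hmono : ∀ p (h : p + 1 < n), w ⟨p, by omega⟩ < w ⟨p+1, h⟩ := by
    intro p h
    rcases lt_trichotomy (w ⟨p, by omega⟩) (w ⟨p+1, h⟩) with h'|h'|h'
    · exact h'
    · exfalso
      have := w.injective h'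
      have : p = p + 1 := congrArg Fin.val this
      omega
    · exact absurd h' (not_lt.mpr (hc p h))
  have hsm : StrictMono w := by
    have step : ∀ k p (hp : p < n) (hpk : p + k + 1 < n),
        w ⟨p, hp⟩ < w ⟨p + k + 1, hpk⟩ := by
      intro k
      induction k with
      | zero => intro p hp hpk; exact hmono p hpk
      | succ k ih =>
        intro p hp hpk
        have h1 : p + k + 1 < n := by omega
        exact lt_trans (ih p hp h1) (hmono (p + k + 1) (by omega))
    intro a b hab
    rw [Fin.lt_def] at hab
    have hval : b.val = a.val + (b.val - a.val - 1) + 1 := by omega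
    have hstep := step (b.val - a.val - 1) a.val a.isLt (by omega)
    have e1 : a = ⟨a.val, a.isLt⟩ := Fin.ext rfl
    have e2 : b = ⟨a.val + (b.val - a.val - 1) + 1, by omega⟩ :=
      Fin.ext (show b.val = a.val + (b.val - a.val - 1) + 1 by omega)
    rw [e1, e2]
    exact hstep
  exact hw (strictMono_eq_one hsm)

end Aux3
section Aux4
open Equiv Finset

variable {n : ℕ}

lemma exists_word (w : Equiv.Perm (Fin n)) :
    ∃ l : List ℕ, Valid n l ∧ l.length = invc w ∧ wordProd n l = w := by
  obtain ⟨m, hm⟩ : ∃ m, m = invc w := ⟨_, rfl⟩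
  induction m using Nat.strong_induction_on generalizing w with
  | _ m ih =>
    by_cases hw : w = 1
    · exact ⟨[], fun j hj => absurd hj List.not_mem_nil, by
        rw [hw, invc_one]; rfl, by rw [hw]; rfl⟩
    · obtain ⟨p, h, hdesc⟩ := exists_descent hw
      rcases invc_mul_swP w p h with ⟨h1, _⟩ | ⟨_, h2⟩
      · exact absurd hdesc (not_lt.mpr h1.le)
      · set w' := w * swP n p h with hw'
        have hcw : invc w = invc w' + 1 := h2
        obtain ⟨l', hv', hl', hp'⟩ := ih (invc w') (by omega) w' rfl
        refine ⟨l' ++ [p+1], ?_, ?_, ?_⟩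
        · intro j hj
          rcases List.mem_append.mp hj with hj | hj
          · exact hv' j hj
          · have : j = p + 1 := List.mem_singleton.mp hj
            omega
        · rw [List.length_append, hl']; simp [hcw]
        · rw [wordProd_concat, hp', simpleRefl_eq_swP (by omega) (by omega), hw', mul_assoc]
          show w * (swP n p h * swP n p h) = w
          rw [swP_mul_self, mul_one]

lemma invc_le_length {l : List ℕ} (hv : Valid n l) : invc (wordProd n l) ≤ l.length := by
  induction l using List.reverseRecOn with
  | nil => rw [wordProd_nil, invc_one]; exact Nat.zero_le _
  | append_singleton l j ih =>
    have hv' : Valid n l := fun i hi => hv i (List.mem_append_left _ hi)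
    have hj : 1 ≤ j ∧ j ≤ n - 1 := hv j (List.mem_append_right _ (List.mem_singleton_self j))
    have hle := ih hv'
    rw [wordProd_concat]
    rcases invc_mul_simpleRefl (wordProd n l) hj.1 hj.2 with h | h <;>
      rw [List.length_append] <;> simp only [List.length_singleton] <;> omega

lemma len_eq_invc (w : Equiv.Perm (Fin n)) : len n w = invc w := by
  have hne : {k | ∃ l : List ℕ, (∀ j ∈ l, 1 ≤ j ∧ j ≤ n - 1) ∧ l.length = k ∧
      wordProd n l = w}.Nonempty := by
    obtain ⟨l, hv, hl, hp⟩ := exists_word w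
    exact ⟨l.length, l, hv, rfl, hp⟩
  apply le_antisymm
  · obtain ⟨l, hv, hl, hp⟩ := exists_word w
    exact (Nat.sInf_le ⟨l, hv, hl, hp⟩ : len n w ≤ invc w)
  · obtain ⟨l, hv, hl, hp⟩ := Nat.sInf_mem hne
    have h2 := invc_le_length (n := n) hv
    rw [hp] at h2
    unfold len
    omega

lemma len_one : len n (1 : Equiv.Perm (Fin n)) = 0 := by rw [len_eq_invc, invc_one]

lemma len_le_length {l : List ℕ} (hv : Valid n l) : len n (wordProd n l) ≤ l.length := by
  rw [len_eq_invc]; exact invc_le_length hv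

lemma exists_reduced_word (w : Equiv.Perm (Fin n)) :
    ∃ l : List ℕ, Valid n l ∧ IsReduced n l ∧ wordProd n l = w := by
  obtain ⟨l, hv, hl, hp⟩ := exists_word w
  exact ⟨l, hv, ⟨hv, by rw [hp, len_eq_invc, ← hl]⟩, hp⟩

lemma len_mul_swP (w : Equiv.Perm (Fin n)) (p : ℕ) (h : p + 1 < n) :
    (w ⟨p, by omega⟩ < w ⟨p+1, h⟩ ∧ len n (w * swP n p h) = len n w + 1) ∨
    (w ⟨p+1, h⟩ < w ⟨p, by omega⟩ ∧ len n w = len n (w * swP n p h) + 1) := by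
  rw [len_eq_invc, len_eq_invc]
  exact invc_mul_swP w p h

lemma invc_inv (w : Equiv.Perm (Fin n)) : invc w⁻¹ = invc w := by
  unfold invc
  apply Finset.card_nbij' (fun q => (w⁻¹ q.2, w⁻¹ q.1)) (fun q => (w q.2, w q.1))
  · intro q hq
    simp only [Finset.mem_coe, invSet, Finset.mem_filter, Finset.mem_univ, true_and] at hq ⊢
    refine ⟨hq.2, ?_⟩
    rw [Equiv.Perm.apply_inv_self, Equiv.Perm.apply_inv_self]
    exact hq.1
  · intro q hq
    simp only [Finset.mem_coe, invSet, Finset.mem_filter, Finset.mem_univ, true_and] at hq ⊢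
    refine ⟨hq.2, ?_⟩
    rw [Equiv.Perm.inv_apply_self, Equiv.Perm.inv_apply_self]
    exact hq.1
  · intro q hq; exact Prod.ext (Equiv.Perm.apply_inv_self _ _) (Equiv.Perm.apply_inv_self _ _)
  · intro q hq; exact Prod.ext (Equiv.Perm.inv_apply_self _ _) (Equiv.Perm.inv_apply_self _ _)

lemma len_inv (w : Equiv.Perm (Fin n)) : len n w⁻¹ = len n w := by
  rw [len_eq_invc, len_eq_invc, invc_inv]

end Aux4
section Aux5
open Equiv Finset

variable {n : ℕ}

/-- The dominance order on permutations (pointwise comparison of rank matrices). -/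
def dle (u w : Equiv.Perm (Fin n)) : Prop := ∀ i j, dcnt u i j ≤ dcnt w i j

lemma dle_refl (w : Equiv.Perm (Fin n)) : dle w w := fun _ _ => le_rfl

lemma dle_trans {u v w : Equiv.Perm (Fin n)} (h1 : dle u v) (h2 : dle v w) : dle u w :=
  fun i j => le_trans (h1 i j) (h2 i j)

lemma dcnt_mul_swP_ne (w : Equiv.Perm (Fin n)) {p : ℕ} (h : p + 1 < n) {i : ℕ} (j : ℕ)
    (hi : i ≠ p + 1) : dcnt (w * swP n p h) i j = dcnt w i j := by
  rw [dcnt_eq_card, dcnt_eq_card]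
  apply Finset.card_nbij' (fun a => swP n p h a) (fun a => swP n p h a)
  · intro a ha
    simp only [Finset.mem_coe, Finset.mem_filter, Finset.mem_univ, true_and] at ha ⊢
    refine ⟨?_, ?_⟩
    · have hv := swP_val p h a
      split_ifs at hv <;> omega
    · have : (w * swP n p h) a = w (swP n p h a) := rfl
      rw [← this]; exact ha.2
  · intro a ha
    simp only [Finset.mem_coe, Finset.mem_filter, Finset.mem_univ, true_and] at ha ⊢
    refine ⟨?_, ?_⟩
    · have hv := swP_val p h a
      split_ifs at hv <;> omega
    · show j ≤ (w (swP n p h (swP n p h a))).val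
      rw [swP_swP]; exact ha.2
  · intro a _; exact swP_swP p h a
  · intro a _; exact swP_swP p h a

lemma dcnt_mul_swP_eq (w : Equiv.Perm (Fin n)) {p : ℕ} (h : p + 1 < n) (j : ℕ) :
    dcnt (w * swP n p h) (p+1) j = dcnt w p j + (if j ≤ (w ⟨p+1, h⟩).val then 1 else 0) := by
  have e : (w * swP n p h) ⟨p, by omega⟩ = w ⟨p+1, h⟩ :=
    congrArg w (Equiv.swap_apply_left _ _)
  rw [dcnt_succ _ p j (by omega), dcnt_mul_swP_ne w h j (by omega), e]

/-- `x ≤ x·s` when `s` increases length. -/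
lemma dle_mul_swP_of_inc {x : Equiv.Perm (Fin n)} {p : ℕ} (h : p + 1 < n)
    (hx : x ⟨p, by omega⟩ < x ⟨p+1, h⟩) : dle x (x * swP n p h) := by
  intro i j
  rcases eq_or_ne i (p+1) with rfl | hi
  · have hpn : p < n := by omega
    have hx' : (x ⟨p, hpn⟩).val < (x ⟨p+1, h⟩).val := Fin.lt_def.mp hx
    rw [dcnt_mul_swP_eq x h j, dcnt_succ _ p j hpn]
    split_ifs <;> omega
  · rw [dcnt_mul_swP_ne x h j hi]

/-- `x·s ≤ x` when `s` decreases length. -/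
lemma dle_mul_swP_of_dec {x : Equiv.Perm (Fin n)} {p : ℕ} (h : p + 1 < n)
    (hx : x ⟨p+1, h⟩ < x ⟨p, by omega⟩) : dle (x * swP n p h) x := by
  intro i j
  rcases eq_or_ne i (p+1) with rfl | hi
  · have hpn : p < n := by omega
    have hx' : (x ⟨p+1, h⟩).val < (x ⟨p, hpn⟩).val := Fin.lt_def.mp hx
    rw [dcnt_mul_swP_eq x h j, dcnt_succ _ p j hpn]
    split_ifs <;> omega
  · rw [dcnt_mul_swP_ne x h j hi]

/-- Core lifting: both increase. -/
lemma dle_lift_core {x y : Equiv.Perm (Fin n)} {p : ℕ} (h : p + 1 < n) (hxy : dle x y)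
    (hx : x ⟨p, by omega⟩ < x ⟨p+1, h⟩) (hy : y ⟨p, by omega⟩ < y ⟨p+1, h⟩) :
    dle (x * swP n p h) (y * swP n p h) := by
  intro i j
  rcases eq_or_ne i (p+1) with rfl | hi
  · rw [dcnt_mul_swP_eq x h j, dcnt_mul_swP_eq y h j]
    have hpn : p < n := by omega
    have hx' : (x ⟨p, hpn⟩).val < (x ⟨p+1, h⟩).val := Fin.lt_def.mp hx
    have hy' : (y ⟨p, hpn⟩).val < (y ⟨p+1, h⟩).val := Fin.lt_def.mp hy
    have e1 := hxy p j
    have e2 := hxy (p+1) j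
    have e3 := hxy (p+1+1) j
    have hx1 := dcnt_succ x p j hpn
    have hx2 := dcnt_succ x (p+1) j h
    have hy1 := dcnt_succ y p j hpn
    have hy2 := dcnt_succ y (p+1) j h
    split_ifs at hx1 hx2 hy1 hy2 ⊢ <;> omega
  · rw [dcnt_mul_swP_ne x h j hi, dcnt_mul_swP_ne y h j hi]
    exact hxy i j

/-- Lifting property (upward): if `x ≤ y` and `y < ys`, then `xs ≤ ys` and `x ≤ ys`. -/
lemma dle_lift {x y : Equiv.Perm (Fin n)} {p : ℕ} (h : p + 1 < n) (hxy : dle x y)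
    (hy : y ⟨p, by omega⟩ < y ⟨p+1, h⟩) :
    dle (x * swP n p h) (y * swP n p h) ∧ dle x (y * swP n p h) := by
  have h2 : dle x (y * swP n p h) := dle_trans hxy (dle_mul_swP_of_inc h hy)
  refine ⟨?_, h2⟩
  rcases lt_trichotomy (x ⟨p, by omega⟩) (x ⟨p+1, h⟩) with hx | hx | hx
  · exact dle_lift_core h hxy hx hy
  · exfalso
    have hc := x.injective hx
    have : p = p + 1 := congrArg Fin.val hc
    omega
  · exact dle_trans (dle_mul_swP_of_dec h hx) h2

/-- Absorption: if `x ≤ y` and `ys < y` then `xs ≤ y`. -/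
lemma dle_absorb {x y : Equiv.Perm (Fin n)} {p : ℕ} (h : p + 1 < n) (hxy : dle x y)
    (hy : y ⟨p+1, h⟩ < y ⟨p, by omega⟩) : dle (x * swP n p h) y := by
  rcases lt_trichotomy (x ⟨p, by omega⟩) (x ⟨p+1, h⟩) with hx | hx | hx
  · intro i j
    rcases eq_or_ne i (p+1) with rfl | hi
    · rw [dcnt_mul_swP_eq x h j]
      have hpn : p < n := by omega
      have hx' : (x ⟨p, hpn⟩).val < (x ⟨p+1, h⟩).val := Fin.lt_def.mp hx
      have hy' : (y ⟨p+1, h⟩).val < (y ⟨p, hpn⟩).val := Fin.lt_def.mp hy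
      have e1 := hxy p j
      have e2 := hxy (p+1) j
      have e3 := hxy (p+1+1) j
      have hx1 := dcnt_succ x p j hpn
      have hx2 := dcnt_succ x (p+1) j h
      have hy1 := dcnt_succ y p j hpn
      have hy2 := dcnt_succ y (p+1) j h
      split_ifs at hx1 hx2 hy1 hy2 ⊢ <;> omega
    · rw [dcnt_mul_swP_ne x h j hi]
      exact hxy i j
  · exfalso
    have hc := x.injective hx
    have : p = p + 1 := congrArg Fin.val hc
    omega
  · exact dle_trans (dle_mul_swP_of_dec h hx) hxy

/-- Downward lifting 1: if `x ≤ y`, `ys < y`, `xs < x` then `xs ≤ ys`. -/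
lemma dle_lift_down {x y : Equiv.Perm (Fin n)} {p : ℕ} (h : p + 1 < n) (hxy : dle x y)
    (hy : y ⟨p+1, h⟩ < y ⟨p, by omega⟩) (hx : x ⟨p+1, h⟩ < x ⟨p, by omega⟩) :
    dle (x * swP n p h) (y * swP n p h) := by
  intro i j
  rcases eq_or_ne i (p+1) with rfl | hi
  · rw [dcnt_mul_swP_eq x h j, dcnt_mul_swP_eq y h j]
    have hpn : p < n := by omega
    have hx' : (x ⟨p+1, h⟩).val < (x ⟨p, hpn⟩).val := Fin.lt_def.mp hx
    have hy' : (y ⟨p+1, h⟩).val < (y ⟨p, hpn⟩).val := Fin.lt_def.mp hy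
    have e1 := hxy p j
    have e2 := hxy (p+1) j
    have e3 := hxy (p+1+1) j
    have hx1 := dcnt_succ x p j hpn
    have hx2 := dcnt_succ x (p+1) j h
    have hy1 := dcnt_succ y p j hpn
    have hy2 := dcnt_succ y (p+1) j h
    split_ifs at hx1 hx2 hy1 hy2 ⊢ <;> omega
  · rw [dcnt_mul_swP_ne x h j hi, dcnt_mul_swP_ne y h j hi]
    exact hxy i j

/-- Downward lifting 2: if `x ≤ y`, `ys < y`, `x < xs` then `x ≤ ys`. -/
lemma dle_lift_down' {x y : Equiv.Perm (Fin n)} {p : ℕ} (h : p + 1 < n) (hxy : dle x y)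
    (hy : y ⟨p+1, h⟩ < y ⟨p, by omega⟩) (hx : x ⟨p, by omega⟩ < x ⟨p+1, h⟩) :
    dle x (y * swP n p h) := by
  intro i j
  rcases eq_or_ne i (p+1) with rfl | hi
  · rw [dcnt_mul_swP_eq y h j]
    have hpn : p < n := by omega
    have hx' : (x ⟨p, hpn⟩).val < (x ⟨p+1, h⟩).val := Fin.lt_def.mp hx
    have hy' : (y ⟨p+1, h⟩).val < (y ⟨p, hpn⟩).val := Fin.lt_def.mp hy
    have e1 := hxy p j
    have e2 := hxy (p+1) j
    have e3 := hxy (p+1+1) j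
    have hx1 := dcnt_succ x p j hpn
    have hx2 := dcnt_succ x (p+1) j h
    have hy1 := dcnt_succ y p j hpn
    have hy2 := dcnt_succ y (p+1) j h
    split_ifs at hx1 hx2 hy1 hy2 ⊢ <;> omega
  · rw [dcnt_mul_swP_ne y h j hi]
    exact hxy i j

lemma dle_antisymm {x y : Equiv.Perm (Fin n)} (h1 : dle x y) (h2 : dle y x) : x = y := by
  have heq : ∀ i j, dcnt x i j = dcnt y i j := fun i j => le_antisymm (h1 i j) (h2 i j)
  apply Equiv.ext
  intro a
  apply Fin.ext
  apply le_antisymm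
  · have e1 := heq (a.val + 1) ((x a).val)
    have e2 := heq a.val ((x a).val)
    have hx1 : dcnt x (a.val+1) ((x a).val) = dcnt x a.val ((x a).val) +
        (if (x a).val ≤ (x ⟨a.val, a.isLt⟩).val then 1 else 0) := dcnt_succ x a.val _ a.isLt
    have hy1 : dcnt y (a.val+1) ((x a).val) = dcnt y a.val ((x a).val) +
        (if (x a).val ≤ (y ⟨a.val, a.isLt⟩).val then 1 else 0) := dcnt_succ y a.val _ a.isLt
    have ea : (⟨a.val, a.isLt⟩ : Fin n) = a := Fin.ext rfl
    rw [ea] at hx1 hy1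
    split_ifs at hx1 hy1 <;> omega
  · have e1 := heq (a.val + 1) ((y a).val)
    have e2 := heq a.val ((y a).val)
    have hx1 : dcnt x (a.val+1) ((y a).val) = dcnt x a.val ((y a).val) +
        (if (y a).val ≤ (x ⟨a.val, a.isLt⟩).val then 1 else 0) := dcnt_succ x a.val _ a.isLt
    have hy1 : dcnt y (a.val+1) ((y a).val) = dcnt y a.val ((y a).val) +
        (if (y a).val ≤ (y ⟨a.val, a.isLt⟩).val then 1 else 0) := dcnt_succ y a.val _ a.isLt
    have ea : (⟨a.val, a.isLt⟩ : Fin n) = a := Fin.ext rfl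
    rw [ea] at hx1 hy1
    split_ifs at hx1 hy1 <;> omega

lemma dcnt_one_eq_zero {i j : ℕ} (hij : i ≤ j) : dcnt (1 : Equiv.Perm (Fin n)) i j = 0 := by
  induction i with
  | zero => rfl
  | succ i ih =>
    rcases Nat.lt_or_ge i n with h | h
    · rw [dcnt_succ _ i j h]
      have e : ((1 : Equiv.Perm (Fin n)) ⟨i, h⟩).val = i := rfl
      rw [e, if_neg (by omega), ih (by omega), add_zero]
    · rw [dcnt_succ_of_ge _ i j h, ih (by omega)]

lemma dle_one_eq {u : Equiv.Perm (Fin n)} (h : dle u 1) : u = 1 := by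
  by_contra hu
  have hex : ∃ v, v < n ∧ ∀ hv : v < n, u ⟨v, hv⟩ ≠ ⟨v, hv⟩ := by
    by_contra hc
    push_neg at hc
    apply hu
    apply Equiv.ext
    intro a
    obtain ⟨hv, hne⟩ := hc a.val a.isLt
    have ea : (⟨a.val, hv⟩ : Fin n) = a := Fin.ext rfl
    rw [ea] at hne
    exact hne
  classical
  have hexn : ∃ v, v < n ∧ ∀ hv : v < n, u ⟨v, hv⟩ ≠ ⟨v, hv⟩ := hex
  set m := Nat.find hexn with hm
  obtain ⟨hmn, hmne⟩ := Nat.find_spec hexn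
  have hmin : ∀ v, v < m → ∀ hvn : v < n, u ⟨v, hvn⟩ = ⟨v, hvn⟩ := by
    intro v hvm hvn
    have := Nat.find_min hexn hvm
    push_neg at this
    obtain ⟨hv', he⟩ := this hvn
    exact he
  have hgt : m < (u ⟨m, hmn⟩).val := by
    rcases Nat.lt_trichotomy (u ⟨m, hmn⟩).val m with h1 | h1 | h1
    · exfalso
      set c := u ⟨m, hmn⟩ with hc
      have hcv : c.val < m := h1
      have := hmin c.val hcv c.isLt
      have hcc : (⟨c.val, c.isLt⟩ : Fin n) = c := Fin.ext rfl
      rw [hcc] at this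
      have : (⟨m, hmn⟩ : Fin n) = c := u.injective (by rw [this, hc])
      have : m = c.val := congrArg Fin.val this
      omega
    · exact absurd (Fin.ext h1 : u ⟨m, hmn⟩ = ⟨m, hmn⟩) (hmne hmn)
    · exact h1
  have hd := h (m+1) ((u ⟨m, hmn⟩).val)
  rw [dcnt_one_eq_zero (by omega)] at hd
  have hd1 : dcnt u (m+1) ((u ⟨m, hmn⟩).val) = dcnt u m ((u ⟨m, hmn⟩).val) +
      (if (u ⟨m, hmn⟩).val ≤ (u ⟨m, hmn⟩).val then 1 else 0) := dcnt_succ u m _ hmn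
  rw [if_pos le_rfl] at hd1
  omega

end Aux5
section Aux6
open Equiv Finset

variable {n : ℕ}

/-- Dichotomy for multiplication by a simple reflection. -/
lemma simpleRefl_dichotomy {j : ℕ} (h1 : 1 ≤ j) (h2 : j ≤ n - 1) (w : Equiv.Perm (Fin n)) :
    (len n (w * simpleRefl n j) = len n w + 1 ∧ dle w (w * simpleRefl n j)) ∨
    (len n w = len n (w * simpleRefl n j) + 1 ∧ dle (w * simpleRefl n j) w) := by
  rw [simpleRefl_eq_swP h1 h2]
  rcases len_mul_swP w (j-1) (by omega) with ⟨hv, hl⟩ | ⟨hv, hl⟩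
  · exact Or.inl ⟨hl, dle_mul_swP_of_inc _ hv⟩
  · exact Or.inr ⟨hl, dle_mul_swP_of_dec _ hv⟩

lemma dle_lift' {x y : Equiv.Perm (Fin n)} {j : ℕ} (h1 : 1 ≤ j) (h2 : j ≤ n - 1)
    (hxy : dle x y) (hlen : len n y < len n (y * simpleRefl n j)) :
    dle (x * simpleRefl n j) (y * simpleRefl n j) ∧ dle x (y * simpleRefl n j) := by
  rw [simpleRefl_eq_swP h1 h2] at *
  rcases len_mul_swP y (j-1) (by omega) with ⟨hv, hl⟩ | ⟨hv, hl⟩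
  · exact dle_lift _ hxy hv
  · omega

lemma dle_absorb' {x y : Equiv.Perm (Fin n)} {j : ℕ} (h1 : 1 ≤ j) (h2 : j ≤ n - 1)
    (hxy : dle x y) (hlen : len n (y * simpleRefl n j) < len n y) :
    dle (x * simpleRefl n j) y := by
  rw [simpleRefl_eq_swP h1 h2] at *
  rcases len_mul_swP y (j-1) (by omega) with ⟨hv, hl⟩ | ⟨hv, hl⟩
  · omega
  · exact dle_absorb _ hxy hv

lemma dle_lift_down1' {x y : Equiv.Perm (Fin n)} {j : ℕ} (h1 : 1 ≤ j) (h2 : j ≤ n - 1)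
    (hxy : dle x y) (hleny : len n (y * simpleRefl n j) < len n y)
    (hlenx : len n (x * simpleRefl n j) < len n x) :
    dle (x * simpleRefl n j) (y * simpleRefl n j) := by
  rw [simpleRefl_eq_swP h1 h2] at *
  rcases len_mul_swP y (j-1) (by omega) with ⟨hv, hl⟩ | ⟨hv, hl⟩
  · omega
  · rcases len_mul_swP x (j-1) (by omega) with ⟨hv', hl'⟩ | ⟨hv', hl'⟩
    · omega
    · exact dle_lift_down _ hxy hv hv'

lemma dle_lift_down2' {x y : Equiv.Perm (Fin n)} {j : ℕ} (h1 : 1 ≤ j) (h2 : j ≤ n - 1)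
    (hxy : dle x y) (hleny : len n (y * simpleRefl n j) < len n y)
    (hlenx : len n x < len n (x * simpleRefl n j)) :
    dle x (y * simpleRefl n j) := by
  rw [simpleRefl_eq_swP h1 h2] at *
  rcases len_mul_swP y (j-1) (by omega) with ⟨hv, hl⟩ | ⟨hv, hl⟩
  · omega
  · rcases len_mul_swP x (j-1) (by omega) with ⟨hv', hl'⟩ | ⟨hv', hl'⟩
    · exact dle_lift_down' _ hxy hv hv'
    · omega

lemma demProd_concat (l : List ℕ) (j : ℕ) :
    demProd n (l ++ [j]) = demStep n (demProd n l) j := by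
  unfold demProd
  rw [List.foldl_append]
  rfl

/-- The Demazure product of a word is the greatest element of the set of subword products. -/
lemma demProd_spec {l : List ℕ} (hv : Valid n l) :
    (∃ l', l'.Sublist l ∧ wordProd n l' = demProd n l) ∧
    (∀ l', l'.Sublist l → dle (wordProd n l') (demProd n l)) := by
  induction l using List.reverseRecOn with
  | nil =>
    constructor
    · exact ⟨[], List.Sublist.refl _, rfl⟩
    · intro l' hl'
      rw [List.sublist_nil.mp hl']
      exact dle_refl _
  | append_singleton l j ih =>
    have hvl : Valid n l := fun i hi => hv i (List.mem_append_left _ hi)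
    have hj : 1 ≤ j ∧ j ≤ n - 1 := hv j (List.mem_append_right _ (List.mem_singleton_self j))
    obtain ⟨⟨l₁, hl₁s, hl₁p⟩, hub⟩ := ih hvl
    rw [demProd_concat]
    rcases simpleRefl_dichotomy hj.1 hj.2 (demProd n l) with ⟨hlen, hdle⟩ | ⟨hlen, hdle⟩
    · have hstep : demStep n (demProd n l) j = demProd n l * simpleRefl n j := by
        unfold demStep; rw [if_pos (by omega)]
      rw [hstep]
      constructor
      · refine ⟨l₁ ++ [j], ?_, ?_⟩
        · exact List.Sublist.append hl₁s (List.Sublist.refl _)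
        · rw [wordProd_concat, hl₁p]
      · intro l' hl'
        rcases List.sublist_append_iff.mp hl' with ⟨x, y, rfl, hx, hy⟩
        rcases List.sublist_singleton.mp hy with rfl | rfl
        · rw [List.append_nil]
          exact dle_trans (hub x hx) hdle
        · rw [wordProd_concat]
          exact (dle_lift' hj.1 hj.2 (hub x hx) (by omega)).1
    · have hstep : demStep n (demProd n l) j = demProd n l := by
        unfold demStep; rw [if_neg (by omega)]
      rw [hstep]
      constructor
      · exact ⟨l₁, List.Sublist.trans hl₁s (List.sublist_append_left _ _), hl₁p⟩
      · intro l' hl'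
        rcases List.sublist_append_iff.mp hl' with ⟨x, y, rfl, hx, hy⟩
        rcases List.sublist_singleton.mp hy with rfl | rfl
        · rw [List.append_nil]
          exact hub x hx
        · rw [wordProd_concat]
          exact dle_absorb' hj.1 hj.2 (hub x hx) (by omega)

/-- On a reduced word, the Demazure product agrees with the ordinary product. -/
lemma demProd_reduced {l : List ℕ} (hv : Valid n l) (hr : IsReduced n l) :
    demProd n l = wordProd n l := by
  induction l using List.reverseRecOn with
  | nil => rfl
  | append_singleton l j ih =>
    have hvl : Valid n l := fun i hi => hv i (List.mem_append_left _ hi)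
    have hj : 1 ≤ j ∧ j ≤ n - 1 := hv j (List.mem_append_right _ (List.mem_singleton_self j))
    have hlw : len n (wordProd n l) ≤ l.length := len_le_length hvl
    have hrlen : len n (wordProd n (l ++ [j])) = l.length + 1 := by
      have := hr.2; rwa [List.length_append, List.length_singleton] at this
    rw [wordProd_concat] at hrlen
    rcases simpleRefl_dichotomy hj.1 hj.2 (wordProd n l) with ⟨hlen, _⟩ | ⟨hlen, _⟩
    · have hlred : IsReduced n l := ⟨hvl, by omega⟩
      rw [demProd_concat, ih hvl hlred]
      unfold demStep
      rw [if_pos (by omega), wordProd_concat]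
    · omega

/-- Subword implies dominance. -/
lemma bruhatLE_imp_dle {u w : Equiv.Perm (Fin n)} (h : bruhatLE n u w) : dle u w := by
  obtain ⟨l, l', hred, hw, hsub, hred', hu⟩ := h
  have hv : Valid n l := hred.1
  have := (demProd_spec hv).2 l' hsub
  rw [hu, demProd_reduced hv hred, hw] at this
  exact this

/-- Dominance implies the subword property with respect to ANY reduced word. -/
lemma dle_subword' : ∀ (l : List ℕ) {u w : Equiv.Perm (Fin n)}, dle u w →
    Valid n l → IsReduced n l → wordProd n l = w →
    ∃ l', l'.Sublist l ∧ IsReduced n l' ∧ wordProd n l' = u := by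
  intro l
  induction l using List.reverseRecOn with
  | nil =>
    intro u w h _ _ hw
    have hw1 : w = 1 := by rw [← hw]; rfl
    have hu1 : u = 1 := dle_one_eq (hw1 ▸ h)
    exact ⟨[], List.Sublist.refl _, ⟨fun i hi => absurd hi List.not_mem_nil, len_one⟩,
      hu1.symm⟩
  | append_singleton l j ih =>
    intro u w h hv hr hw
    have hvl : Valid n l := fun i hi => hv i (List.mem_append_left _ hi)
    have hj : 1 ≤ j ∧ j ≤ n - 1 := hv j (List.mem_append_right _ (List.mem_singleton_self j))
    have hlw : len n (wordProd n l) ≤ l.length := len_le_length hvl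
    have hrlen : len n w = l.length + 1 := by
      have := hr.2; rwa [List.length_append, List.length_singleton, hw] at this
    have hws : wordProd n l = w * simpleRefl n j := by
      rw [← hw, wordProd_concat, mul_assoc, simpleRefl_mul_self, mul_one]
    have hdich := simpleRefl_dichotomy hj.1 hj.2 (wordProd n l)
    rw [hws] at hdich hlw
    rw [show w * simpleRefl n j * simpleRefl n j = w by
      rw [mul_assoc, simpleRefl_mul_self, mul_one]] at hdich
    have hlenws : len n (w * simpleRefl n j) = l.length := by
      rcases hdich with ⟨hl1, _⟩ | ⟨hl1, _⟩ <;> omega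
    have hlred : IsReduced n l := ⟨hvl, by rw [hws, hlenws]⟩
    rcases simpleRefl_dichotomy hj.1 hj.2 u with ⟨hul, _⟩ | ⟨hul, _⟩
    · -- len u < len (u s) : u ≤ w s
      have hdle : dle u (w * simpleRefl n j) := by
        have := dle_lift_down2' hj.1 hj.2 h (by omega) (by omega)
        exact this
      obtain ⟨l₁, hs₁, hr₁, hp₁⟩ := ih hdle hvl hlred (by rw [hws])
      exact ⟨l₁, List.Sublist.trans hs₁ (List.sublist_append_left _ _), hr₁, hp₁⟩
    · -- len (u s) < len u : u s ≤ w s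
      have hdle : dle (u * simpleRefl n j) (w * simpleRefl n j) :=
        dle_lift_down1' hj.1 hj.2 h (by omega) (by omega)
      obtain ⟨l₁, hs₁, hr₁, hp₁⟩ := ih hdle hvl hlred (by rw [hws])
      refine ⟨l₁ ++ [j], List.Sublist.append hs₁ (List.Sublist.refl _), ?_, ?_⟩
      · constructor
        · intro i hi
          rcases List.mem_append.mp hi with hi | hi
          · exact hr₁.1 i hi
          · rw [List.mem_singleton.mp hi]; exact hj
        · rw [wordProd_concat, hp₁, List.length_append, List.length_singleton]
          have h2 : u * simpleRefl n j * simpleRefl n j = u := by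
            rw [mul_assoc, simpleRefl_mul_self, mul_one]
          rw [h2, ← hr₁.2, hp₁]
          omega
      · rw [wordProd_concat, hp₁, mul_assoc, simpleRefl_mul_self, mul_one]

lemma dle_subword {u w : Equiv.Perm (Fin n)} (h : dle u w) (l : List ℕ)
    (hv : Valid n l) (hr : IsReduced n l) (hw : wordProd n l = w) :
    ∃ l', l'.Sublist l ∧ IsReduced n l' ∧ wordProd n l' = u :=
  dle_subword' l h hv hr hw

lemma dle_imp_bruhatLE {u w : Equiv.Perm (Fin n)} (h : dle u w) : bruhatLE n u w := by
  obtain ⟨l, hv, hr, hp⟩ := exists_reduced_word w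
  obtain ⟨l', hs, hr', hp'⟩ := dle_subword h l hv hr hp
  exact ⟨l, l', hr, hp, hs, hr', hp'⟩

lemma bruhatLE_iff_dle {u w : Equiv.Perm (Fin n)} : bruhatLE n u w ↔ dle u w :=
  ⟨bruhatLE_imp_dle, dle_imp_bruhatLE⟩

lemma dle_len_le {u w : Equiv.Perm (Fin n)} (h : dle u w) : len n u ≤ len n w := by
  obtain ⟨l, hv, hr, hp⟩ := exists_reduced_word w
  obtain ⟨l', hs, hr', hp'⟩ := dle_subword h l hv hr hp
  rw [← hp', hr'.2, ← hp, hr.2]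
  exact List.Sublist.length_le hs

/-- Deletion: every word contains a reduced subword with the same product. -/
lemma exists_reduced_sublist {l : List ℕ} (hv : Valid n l) :
    ∃ l', l'.Sublist l ∧ IsReduced n l' ∧ wordProd n l' = wordProd n l := by
  induction l using List.reverseRecOn with
  | nil => exact ⟨[], List.Sublist.refl _,
      ⟨fun i hi => absurd hi List.not_mem_nil, len_one⟩, rfl⟩
  | append_singleton l j ih =>
    have hvl : Valid n l := fun i hi => hv i (List.mem_append_left _ hi)
    have hj : 1 ≤ j ∧ j ≤ n - 1 := hv j (List.mem_append_right _ (List.mem_singleton_self j))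
    obtain ⟨l₁, hs₁, hr₁, hp₁⟩ := ih hvl
    rcases simpleRefl_dichotomy hj.1 hj.2 (wordProd n l) with ⟨hlen, _⟩ | ⟨hlen, hdle⟩
    · refine ⟨l₁ ++ [j], List.Sublist.append hs₁ (List.Sublist.refl _), ?_, ?_⟩
      · constructor
        · intro i hi
          rcases List.mem_append.mp hi with hi | hi
          · exact hr₁.1 i hi
          · rw [List.mem_singleton.mp hi]; exact hj
        · rw [wordProd_concat, List.length_append, List.length_singleton, hp₁, hlen,
            ← hp₁, hr₁.2]
      · rw [wordProd_concat, wordProd_concat, hp₁]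
    · -- product decreases: wordProd (l ++ [j]) = wordProd l * s, which is ≤ wordProd l
      have hd2 : dle (wordProd n l * simpleRefl n j) (wordProd n l) := hdle
      have hd3 : dle (wordProd n (l ++ [j])) (wordProd n l₁) := by
        rw [wordProd_concat, hp₁]; exact hd2
      obtain ⟨l₂, hs₂, hr₂, hp₂⟩ := dle_subword hd3 l₁ hr₁.1 hr₁ rfl
      exact ⟨l₂, List.Sublist.trans hs₂ (List.Sublist.trans hs₁
        (List.sublist_append_left _ _)), hr₂, hp₂⟩

end Aux6
section Aux7
open Equiv Finset

variable {n : ℕ}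

lemma w0_mul_w0 : w0 n * w0 n = 1 := by
  apply Equiv.ext
  intro a
  show Fin.revPerm (Fin.revPerm a) = a
  simp

lemma dcnt_one_total (j : ℕ) : ∀ i, i ≤ n → dcnt (1 : Equiv.Perm (Fin n)) i j = i - j := by
  intro i
  induction i with
  | zero =>
    intro _
    have z : dcnt (1 : Equiv.Perm (Fin n)) 0 j = 0 := rfl
    omega
  | succ i ih =>
    intro hi
    have hin : i < n := by omega
    have h1 := dcnt_succ (1 : Equiv.Perm (Fin n)) i j hin
    have e : ((1 : Equiv.Perm (Fin n)) ⟨i, hin⟩).val = i := rfl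
    rw [e] at h1
    have := ih (by omega)
    split_ifs at h1 <;> omega

lemma dcnt_mul_w0 (w : Equiv.Perm (Fin n)) (j : ℕ) : ∀ i, i ≤ n →
    dcnt (w * w0 n) i j + dcnt w (n - i) j = dcnt w n j := by
  intro i
  induction i with
  | zero =>
    intro _
    have e : n - 0 = n := rfl
    rw [e]
    have z : dcnt (w * w0 n) 0 j = 0 := rfl
    omega
  | succ i ih =>
    intro hi
    have hin : i < n := by omega
    have hlt : n - i - 1 < n := by omega
    have h1 : dcnt (w * w0 n) (i+1) j = dcnt (w * w0 n) i j +
        (if j ≤ ((w * w0 n) ⟨i, hin⟩).val then 1 else 0) := dcnt_succ _ i j hin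
    have hrev : (w * w0 n) ⟨i, hin⟩ = w ⟨n - i - 1, hlt⟩ := by
      show w (Fin.revPerm ⟨i, hin⟩) = w ⟨n - i - 1, hlt⟩
      apply congrArg w
      apply Fin.ext
      show n - (i + 1) = n - i - 1
      omega
    rw [hrev] at h1
    have h2 : dcnt w (n - i - 1 + 1) j = dcnt w (n - i - 1) j +
        (if j ≤ (w ⟨n - i - 1, hlt⟩).val then 1 else 0) := dcnt_succ _ _ j hlt
    have ih' := ih (by omega)
    have e : n - i = n - i - 1 + 1 := by omega
    rw [e] at ih'
    have e2 : n - (i + 1) = n - i - 1 := by omega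
    rw [e2]
    split_ifs at h1 h2 <;> omega

lemma card_filter_ge (j : ℕ) :
    (Finset.univ.filter fun b : Fin n => j ≤ b.val).card = n - j := by
  have h1 := dcnt_eq_card (1 : Equiv.Perm (Fin n)) n j
  rw [dcnt_one_total j n le_rfl] at h1
  rw [h1]
  congr 1
  ext a
  simp only [Finset.mem_filter, Finset.mem_univ, true_and]
  have e : ((1 : Equiv.Perm (Fin n)) a).val = a.val := rfl
  rw [e]
  exact ⟨fun h => ⟨a.isLt, h⟩, fun h => h.2⟩

lemma card_filter_ge_apply (w : Equiv.Perm (Fin n)) (i : ℕ) :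
    (Finset.univ.filter fun b : Fin n => i ≤ (w b).val).card = n - i := by
  rw [← card_filter_ge (n := n) i]
  apply Finset.card_nbij' (fun b => w b) (fun b => w⁻¹ b)
  · intro a ha; simp only [Finset.mem_coe, Finset.mem_filter, Finset.mem_univ, true_and] at ha ⊢; exact ha
  · intro b hb; simp only [Finset.mem_coe, Finset.mem_filter, Finset.mem_univ, true_and] at hb ⊢
    rw [Equiv.Perm.apply_inv_self]; exact hb
  · intro a _; exact Equiv.Perm.inv_apply_self _ _
  · intro b _; exact Equiv.Perm.apply_inv_self _ _

lemma dcnt_total (w : Equiv.Perm (Fin n)) (j : ℕ) : dcnt w n j = n - j := by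
  rw [dcnt_eq_card, ← card_filter_ge_apply w j]
  congr 1
  ext a
  simp only [Finset.mem_filter, Finset.mem_univ, true_and]
  exact ⟨fun h => h.2, fun h => ⟨a.isLt, h⟩⟩

lemma dle_w0 {u w : Equiv.Perm (Fin n)} (h : dle u w) : dle (w * w0 n) (u * w0 n) := by
  intro i j
  rcases le_or_gt i n with hi | hi
  · have h1 := dcnt_mul_w0 w j i hi
    have h2 := dcnt_mul_w0 u j i hi
    have h3 := h (n - i) j
    have h4 : dcnt w n j = n - j := dcnt_total w j
    have h5 : dcnt u n j = n - j := dcnt_total u j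
    omega
  · rw [dcnt_stable _ j hi.le, dcnt_stable _ j hi.le]
    have h1 := dcnt_mul_w0 w j n le_rfl
    have h2 := dcnt_mul_w0 u j n le_rfl
    have e : n - n = 0 := by omega
    rw [e] at h1 h2
    have z1 : dcnt w 0 j = 0 := rfl
    have z2 : dcnt u 0 j = 0 := rfl
    have h4 : dcnt w n j = n - j := dcnt_total w j
    have h5 : dcnt u n j = n - j := dcnt_total u j
    omega

lemma dle_w0_iff {u w : Equiv.Perm (Fin n)} : dle u w ↔ dle (w * w0 n) (u * w0 n) := by
  refine ⟨dle_w0, fun h => ?_⟩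
  have := dle_w0 h
  rwa [mul_assoc, w0_mul_w0, mul_one, mul_assoc, w0_mul_w0, mul_one] at this

lemma dcnt_inv_add (w : Equiv.Perm (Fin n)) (i j : ℕ) :
    dcnt w⁻¹ i j + (n - i) = (n - j) + dcnt w j i := by
  have hA : dcnt w⁻¹ i j
      = (Finset.univ.filter fun b : Fin n => j ≤ b.val ∧ (w b).val < i).card := by
    rw [dcnt_eq_card]
    apply Finset.card_nbij' (fun a => w⁻¹ a) (fun b => w b)
    · intro a ha; simp only [Finset.mem_coe, Finset.mem_filter, Finset.mem_univ, true_and] at ha ⊢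
      refine ⟨ha.2, ?_⟩
      rw [Equiv.Perm.apply_inv_self]; exact ha.1
    · intro b hb; simp only [Finset.mem_coe, Finset.mem_filter, Finset.mem_univ, true_and] at hb ⊢
      refine ⟨hb.2, ?_⟩
      rw [Equiv.Perm.inv_apply_self]; exact hb.1
    · intro a _; exact Equiv.Perm.apply_inv_self _ _
    · intro b _; exact Equiv.Perm.inv_apply_self _ _
  have hC : dcnt w j i
      = (Finset.univ.filter fun b : Fin n => b.val < j ∧ i ≤ (w b).val).card :=
    dcnt_eq_card w j i
  have hsplit1 : (Finset.univ.filter fun b : Fin n => j ≤ b.val ∧ (w b).val < i).card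
      + (Finset.univ.filter fun b : Fin n => j ≤ b.val ∧ i ≤ (w b).val).card
      = n - j := by
    rw [← card_filter_ge (n := n) j,
      ← Finset.card_filter_add_card_filter_not
        (s := Finset.univ.filter fun b : Fin n => j ≤ b.val)
        (p := fun b : Fin n => (w b).val < i)]
    rw [Finset.filter_filter, Finset.filter_filter]
    congr 2
    ext b
    simp [not_lt]
  have hsplit2 : (Finset.univ.filter fun b : Fin n => b.val < j ∧ i ≤ (w b).val).card
      + (Finset.univ.filter fun b : Fin n => j ≤ b.val ∧ i ≤ (w b).val).card
      = n - i := by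
    rw [← card_filter_ge_apply w i,
      ← Finset.card_filter_add_card_filter_not
        (s := Finset.univ.filter fun b : Fin n => i ≤ (w b).val)
        (p := fun b : Fin n => b.val < j)]
    rw [Finset.filter_filter, Finset.filter_filter]
    congr 2
    · ext b
      simp only [Finset.mem_filter, Finset.mem_univ, true_and]
      tauto
    · ext b
      simp only [Finset.mem_filter, Finset.mem_univ, true_and, not_lt]
      tauto
  omega

lemma dle_inv {u w : Equiv.Perm (Fin n)} (h : dle u w) : dle u⁻¹ w⁻¹ := by
  intro i j
  have h1 := dcnt_inv_add u i j
  have h2 := dcnt_inv_add w i j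
  have h3 := h j i
  omega

lemma dle_inv_iff {u w : Equiv.Perm (Fin n)} : dle u w ↔ dle u⁻¹ w⁻¹ := by
  refine ⟨dle_inv, fun h => ?_⟩
  have := dle_inv h
  rwa [inv_inv, inv_inv] at this

end Aux7
section Aux8
open Equiv Finset

variable {n : ℕ}

lemma simpleRefl_inv (j : ℕ) : (simpleRefl n j)⁻¹ = simpleRefl n j :=
  inv_eq_of_mul_eq_one_right (simpleRefl_mul_self j)

lemma wordProd_reverse (l : List ℕ) : wordProd n l.reverse = (wordProd n l)⁻¹ := by
  induction l with
  | nil => simp [wordProd]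
  | cons j l ih =>
    rw [List.reverse_cons, wordProd_concat, ih, wordProd_cons, mul_inv_rev, simpleRefl_inv]

lemma mem_closure_iff_word {J : Set ℕ} {x : Equiv.Perm (Fin n)} :
    x ∈ Subgroup.closure (simpleRefl n '' J) ↔
    ∃ l : List ℕ, (∀ j ∈ l, j ∈ J) ∧ wordProd n l = x := by
  constructor
  · intro hx
    induction hx using Subgroup.closure_induction with
    | mem y hy =>
      obtain ⟨j, hjJ, rfl⟩ := hy
      exact ⟨[j], by simpa using hjJ, wordProd_singleton j⟩
    | one => exact ⟨[], by simp, rfl⟩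
    | mul a b ha hb iha ihb =>
      obtain ⟨la, hla, rfl⟩ := iha
      obtain ⟨lb, hlb, rfl⟩ := ihb
      refine ⟨la ++ lb, ?_, wordProd_append la lb⟩
      intro j hj
      rcases List.mem_append.mp hj with hj | hj
      · exact hla j hj
      · exact hlb j hj
    | inv a ha iha =>
      obtain ⟨l, hl, rfl⟩ := iha
      exact ⟨l.reverse, fun j hj => hl j (List.mem_reverse.mp hj), wordProd_reverse l⟩
  · rintro ⟨l, hl, rfl⟩
    induction l with
    | nil => exact Subgroup.one_mem _
    | cons j l ih =>
      rw [wordProd_cons]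
      exact Subgroup.mul_mem _
        (Subgroup.subset_closure ⟨j, hl j List.mem_cons_self, rfl⟩)
        (ih fun i hi => hl i (List.mem_cons_of_mem j hi))

lemma dcnt_zero_snd (x : Equiv.Perm (Fin n)) : ∀ i, dcnt x i 0 = min i n := by
  intro i
  induction i with
  | zero => simp [dcnt]
  | succ i ih =>
    rcases Nat.lt_or_ge i n with h | h
    · rw [dcnt_succ x i 0 h, if_pos (Nat.zero_le _), ih]
      omega
    · rw [dcnt_succ_of_ge x i 0 h, ih]
      omega

lemma card_filter_lt (i : ℕ) :
    (Finset.univ.filter fun a : Fin n => a.val < i).card = min i n := by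
  have e : (Finset.univ.filter fun a : Fin n => a.val < i)
      = (Finset.univ.filter fun a : Fin n =>
          a.val < i ∧ 0 ≤ ((1 : Equiv.Perm (Fin n)) a).val) := by
    ext a
    simp only [Finset.mem_filter, Finset.mem_univ, true_and]
    exact ⟨fun hh => ⟨hh, Nat.zero_le _⟩, fun hh => hh.1⟩
  rw [e, ← dcnt_eq_card, dcnt_zero_snd]

lemma dle_one_left (x : Equiv.Perm (Fin n)) : dle 1 x := by
  intro i j
  rcases Nat.le_or_ge i n with hi | hi
  · rw [dcnt_one_total j i hi]
    -- A + B = min i n, B ≤ j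
    have hAB : dcnt x i j + (Finset.univ.filter fun a : Fin n =>
        a.val < i ∧ (x a).val < j).card
        = (Finset.univ.filter fun a : Fin n => a.val < i).card := by
      rw [dcnt_eq_card,
        ← Finset.card_filter_add_card_filter_not
          (s := Finset.univ.filter fun a : Fin n => a.val < i)
          (p := fun a : Fin n => j ≤ (x a).val),
        Finset.filter_filter, Finset.filter_filter]
      congr 2
      ext a
      simp only [Finset.mem_filter, Finset.mem_univ, true_and, not_le]
    have hB : (Finset.univ.filter fun a : Fin n => a.val < i ∧ (x a).val < j).card ≤ j := by
      have hsub : (Finset.univ.filter fun a : Fin n => a.val < i ∧ (x a).val < j)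
          ⊆ (Finset.univ.filter fun a : Fin n => (x a).val < j) := by
        intro a ha
        simp only [Finset.mem_filter, Finset.mem_univ, true_and] at ha ⊢
        exact ha.2
      have h1 := Finset.card_le_card hsub
      have h2 : (Finset.univ.filter fun a : Fin n => (x a).val < j).card
          + (Finset.univ.filter fun a : Fin n => j ≤ (x a).val).card = n := by
        have hh := Finset.card_filter_add_card_filter_not
          (s := (Finset.univ : Finset (Fin n))) (p := fun a : Fin n => (x a).val < j)
        rw [Finset.card_univ, Fintype.card_fin] at hh
        have e : (Finset.univ.filter fun a : Fin n => ¬ (x a).val < j)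
            = (Finset.univ.filter fun a : Fin n => j ≤ (x a).val) := by
          ext a
          simp only [Finset.mem_filter, Finset.mem_univ, true_and, not_lt]
        rw [e] at hh
        exact hh
      have h3 := card_filter_ge_apply x j
      omega
    have hI := card_filter_lt (n := n) i
    omega
  · rw [dcnt_stable _ j hi, dcnt_stable _ j hi, dcnt_total, dcnt_total]

/-- A maximal-length element of the parabolic subgroup `W_J`, with its key properties. -/
lemma exists_parabolic_top (J : Set ℕ) (hJ : ∀ j ∈ J, 1 ≤ j ∧ j ≤ n - 1) :
    ∃ m : Equiv.Perm (Fin n), m ∈ Subgroup.closure (simpleRefl n '' J) ∧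
      (∀ x ∈ Subgroup.closure (simpleRefl n '' J), dle x m) ∧
      (∀ u : Equiv.Perm (Fin n), dle u m → u ∈ Subgroup.closure (simpleRefl n '' J)) := by
  classical
  obtain ⟨m, hmem, hmax⟩ := Finset.exists_max_image
    (Finset.univ.filter fun x : Equiv.Perm (Fin n) =>
      x ∈ Subgroup.closure (simpleRefl n '' J)) (len n)
    ⟨1, by simp [Subgroup.one_mem]⟩
  simp only [Finset.mem_filter, Finset.mem_univ, true_and] at hmem
  have hmax' : ∀ x ∈ Subgroup.closure (simpleRefl n '' J), len n x ≤ len n m := by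
    intro x hx
    exact hmax x (by simp only [Finset.mem_filter, Finset.mem_univ, true_and]; exact hx)
  have hdesc : ∀ j ∈ J, len n (m * simpleRefl n j) < len n m := by
    intro j hj
    have hmem' : m * simpleRefl n j ∈ Subgroup.closure (simpleRefl n '' J) :=
      Subgroup.mul_mem _ hmem (Subgroup.subset_closure ⟨j, hj, rfl⟩)
    have hle := hmax' _ hmem'
    rcases simpleRefl_dichotomy (hJ j hj).1 (hJ j hj).2 m with ⟨hl, _⟩ | ⟨hl, _⟩ <;> omega
  have hup : ∀ x ∈ Subgroup.closure (simpleRefl n '' J), dle x m := by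
    intro x hx
    obtain ⟨l, hlJ, rfl⟩ := mem_closure_iff_word.mp hx
    induction l using List.reverseRecOn with
    | nil => exact dle_one_left m
    | append_singleton l j ih =>
      have hlJ' : ∀ i ∈ l, i ∈ J := fun i hi => hlJ i (List.mem_append_left _ hi)
      have hjJ : j ∈ J := hlJ j (List.mem_append_right _ (List.mem_singleton_self j))
      have ihd : dle (wordProd n l) m :=
        ih hlJ' (mem_closure_iff_word.mpr ⟨l, hlJ', rfl⟩)
      rw [wordProd_concat]
      exact dle_absorb' (hJ j hjJ).1 (hJ j hjJ).2 ihd (hdesc j hjJ)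
  refine ⟨m, hmem, hup, ?_⟩
  intro u hu
  obtain ⟨l, hlJ, hlp⟩ := mem_closure_iff_word.mp hmem
  have hvl : Valid n l := fun i hi => hJ i (hlJ i hi)
  obtain ⟨lm, hs, hr, hp⟩ := exists_reduced_sublist hvl
  rw [hlp] at hp
  obtain ⟨l', hs', hr', hp'⟩ := dle_subword hu lm (fun i hi => hJ i (hlJ i (hs.subset hi))) hr hp
  exact mem_closure_iff_word.mpr ⟨l', fun i hi => hlJ i (hs.subset (hs'.subset hi)), hp'⟩

end Aux8
section Aux9
open Equiv Finset

variable {n : ℕ}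

lemma foldDem (w : Equiv.Perm (Fin n)) {l : List ℕ} (hv : Valid n l) :
    ∃ c, (∃ l', l'.Sublist l ∧ wordProd n l' = c) ∧
      List.foldl (demStep n) w l = w * c := by
  induction l using List.reverseRecOn with
  | nil => exact ⟨1, ⟨[], List.Sublist.refl _, rfl⟩, (mul_one w).symm⟩
  | append_singleton l j ih =>
    have hvl : Valid n l := fun i hi => hv i (List.mem_append_left _ hi)
    obtain ⟨c, ⟨l', hs, hp⟩, heq⟩ := ih hvl
    have hfold : List.foldl (demStep n) w (l ++ [j]) =
        demStep n (List.foldl (demStep n) w l) j := by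
      rw [List.foldl_append]; rfl
    rw [hfold, heq]
    unfold demStep
    by_cases hc : len n (w * c) < len n (w * c * simpleRefl n j)
    · rw [if_pos hc]
      refine ⟨c * simpleRefl n j, ⟨l' ++ [j], List.Sublist.append hs (List.Sublist.refl _),
        by rw [wordProd_concat, hp]⟩, by rw [mul_assoc]⟩
    · rw [if_neg hc]
      exact ⟨c, ⟨l', List.Sublist.trans hs (List.sublist_append_left _ _), hp⟩, rfl⟩

lemma exists_greatest_PS (w w' : Equiv.Perm (Fin n)) :
    ∃ M, IsBruhatGreatest n {x | ∃ u v, bruhatLE n u w ∧ bruhatLE n v w' ∧ x = u * v} M ∧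
      (∃ c, dle c w' ∧ M = w * c) ∧
      (∀ x, dle x M → ∃ u v, bruhatLE n u w ∧ bruhatLE n v w' ∧ x = u * v) := by
  obtain ⟨l1, hv1, hr1, hp1⟩ := exists_reduced_word w
  obtain ⟨l2, hv2, hr2, hp2⟩ := exists_reduced_word w'
  have hv12 : Valid n (l1 ++ l2) := by
    intro i hi
    rcases List.mem_append.mp hi with hi | hi
    · exact hv1 i hi
    · exact hv2 i hi
  set M := demProd n (l1 ++ l2) with hM
  obtain ⟨⟨lM, hsM, hpM⟩, hub⟩ := demProd_spec hv12
  -- any subword product of l1 ++ l2 lies in the product set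
  have hdecomp : ∀ l' : List ℕ, l'.Sublist (l1 ++ l2) →
      ∃ u v, bruhatLE n u w ∧ bruhatLE n v w' ∧ wordProd n l' = u * v := by
    intro l' hl'
    rcases List.sublist_append_iff.mp hl' with ⟨x, y, rfl, hx, hy⟩
    refine ⟨wordProd n x, wordProd n y, ?_, ?_, wordProd_append x y⟩
    · apply dle_imp_bruhatLE
      have := (demProd_spec hv1).2 x hx
      rwa [demProd_reduced hv1 hr1, hp1] at this
    · apply dle_imp_bruhatLE
      have := (demProd_spec hv2).2 y hy
      rwa [demProd_reduced hv2 hr2, hp2] at this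
  have hdown : ∀ x, dle x M → ∃ u v, bruhatLE n u w ∧ bruhatLE n v w' ∧ x = u * v := by
    intro x hx
    obtain ⟨lr, hsr, hrr, hpr⟩ := exists_reduced_sublist
      (fun i hi => hv12 i (hsM.subset hi))
    rw [hpM] at hpr
    obtain ⟨lx, hsx, hrx, hpx⟩ := dle_subword hx lr
      (fun i hi => hv12 i (hsM.subset (hsr.subset hi))) hrr hpr
    obtain ⟨u, v, hu, hv, huv⟩ := hdecomp lx (hsx.trans (hsr.trans hsM))
    exact ⟨u, v, hu, hv, by rw [← hpx, huv]⟩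
  refine ⟨M, ⟨?_, ?_⟩, ?_, hdown⟩
  · obtain ⟨u, v, hu, hv, huv⟩ := hdecomp lM hsM
    exact ⟨u, v, hu, hv, by rw [hM, ← hpM, huv]⟩
  · rintro x ⟨u, v, hu, hv, rfl⟩
    obtain ⟨lu, hsu, hru, hpu⟩ := dle_subword (bruhatLE_imp_dle hu) l1 hv1 hr1 hp1
    obtain ⟨lv, hsv, hrv, hpv⟩ := dle_subword (bruhatLE_imp_dle hv) l2 hv2 hr2 hp2
    apply dle_imp_bruhatLE
    have := hub (lu ++ lv) (List.Sublist.append hsu hsv)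
    rwa [wordProd_append, hpu, hpv] at this
  · -- decomposition M = w * c
    have hfold : M = List.foldl (demStep n) (demProd n l1) l2 := by
      rw [hM]
      unfold demProd
      rw [List.foldl_append]
    obtain ⟨c, ⟨lc, hsc, hpc⟩, heq⟩ := foldDem (demProd n l1) hv2
    refine ⟨c, ?_, ?_⟩
    · rw [← hpc]
      have := (demProd_spec hv2).2 lc hsc
      rwa [demProd_reduced hv2 hr2, hp2] at this
    · rw [hfold, heq, demProd_reduced hv1 hr1, hp1]

lemma greatest_unique {K : Set (Equiv.Perm (Fin n))} {m m' : Equiv.Perm (Fin n)}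
    (h1 : IsBruhatGreatest n K m) (h2 : IsBruhatGreatest n K m') : m = m' :=
  dle_antisymm (bruhatLE_imp_dle (h2.2 m h1.1)) (bruhatLE_imp_dle (h1.2 m' h2.1))

lemma demMul_spec (w w' : Equiv.Perm (Fin n)) :
    IsBruhatGreatest n {x | ∃ u v, bruhatLE n u w ∧ bruhatLE n v w' ∧ x = u * v}
      (demMul n w w') := by
  obtain ⟨M, hM, _, _⟩ := exists_greatest_PS w w'
  unfold demMul
  rw [dif_pos ⟨M, hM⟩]
  exact Exists.choose_spec ⟨M, hM⟩

lemma demMul_left_decomp (w w' : Equiv.Perm (Fin n)) :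
    ∃ d, dle d w ∧ demMul n w w' = d * w' := by
  obtain ⟨N, hN, ⟨c, hc, hNc⟩, _⟩ := exists_greatest_PS w'⁻¹ w⁻¹
  have hNinv : IsBruhatGreatest n
      {x | ∃ u v, bruhatLE n u w ∧ bruhatLE n v w' ∧ x = u * v} N⁻¹ := by
    constructor
    · obtain ⟨u, v, hu, hv, huv⟩ := hN.1
      refine ⟨v⁻¹, u⁻¹, ?_, ?_, by rw [huv, mul_inv_rev]⟩
      · apply dle_imp_bruhatLE
        have := dle_inv (bruhatLE_imp_dle hv)
        rwa [inv_inv] at this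
      · apply dle_imp_bruhatLE
        have := dle_inv (bruhatLE_imp_dle hu)
        rwa [inv_inv] at this
    · rintro x ⟨u, v, hu, hv, rfl⟩
      have hx : (u * v)⁻¹ ∈ {x | ∃ a b, bruhatLE n a w'⁻¹ ∧ bruhatLE n b w⁻¹ ∧ x = a * b} := by
        refine ⟨v⁻¹, u⁻¹, ?_, ?_, by rw [mul_inv_rev]⟩
        · exact dle_imp_bruhatLE (dle_inv (bruhatLE_imp_dle hv))
        · exact dle_imp_bruhatLE (dle_inv (bruhatLE_imp_dle hu))
      have := bruhatLE_imp_dle (hN.2 _ hx)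
      apply dle_imp_bruhatLE
      have h2 := dle_inv this
      rwa [inv_inv] at h2
  have he := greatest_unique (demMul_spec w w') hNinv
  refine ⟨c⁻¹, ?_, ?_⟩
  · have := dle_inv hc
    rwa [inv_inv] at this
  · rw [he, hNc, mul_inv_rev, inv_inv]

lemma demMul_down (w w' : Equiv.Perm (Fin n)) {x : Equiv.Perm (Fin n)}
    (hx : dle x (demMul n w w')) :
    ∃ u v, bruhatLE n u w ∧ bruhatLE n v w' ∧ x = u * v := by
  obtain ⟨M, hM, _, hdown⟩ := exists_greatest_PS w w'
  have he := greatest_unique (demMul_spec w w') hM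
  rw [he] at hx
  exact hdown x hx

end Aux9
/-- Let `W_J, W_K` be standard parabolic subgroups of `S_n`, let `τ̂` be
the maximal element of `τ W_J` and `φ̃` the minimal element of `φ W_K` in the Bruhat
order. Then `W_J I(τ⁻¹) φ W_K` has a unique minimal element in the Bruhat order, namely
`(τ̂⁻¹ * (φ̃ w₀)) · w₀`, where `*` is the Demazure product. -/
theorem isBruhatLeast_parabolic_interval (n : ℕ) (hn : 1 ≤ n) (J K : Set ℕ)
    (hJ : ∀ j ∈ J, 1 ≤ j ∧ j ≤ n - 1) (hK : ∀ j ∈ K, 1 ≤ j ∧ j ≤ n - 1)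
    (τ φ τhat φtil : Equiv.Perm (Fin n))
    (hτ : IsBruhatGreatest n
      {x | ∃ v ∈ Subgroup.closure (simpleRefl n '' J), x = τ * v} τhat)
    (hφ : IsBruhatLeast n
      {x | ∃ v ∈ Subgroup.closure (simpleRefl n '' K), x = φ * v} φtil) :
    IsBruhatLeast n
      {x | ∃ a ∈ Subgroup.closure (simpleRefl n '' J), ∃ u, bruhatLE n u τ⁻¹ ∧
        ∃ b ∈ Subgroup.closure (simpleRefl n '' K), x = a * u * φ * b}
      (demMul n τhat⁻¹ (φtil * w0 n) * w0 n) := by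
  classical
  obtain ⟨v₀, hv₀, hτhat⟩ := hτ.1
  obtain ⟨b₀, hb₀, hφtil⟩ := hφ.1
  obtain ⟨mJ, hmJ_mem, hmJ_up, hmJ_down⟩ := exists_parabolic_top J hJ
  have hττ : dle τ⁻¹ τhat⁻¹ := by
    have := hτ.2 τ ⟨1, Subgroup.one_mem _, (mul_one τ).symm⟩
    exact dle_inv (bruhatLE_imp_dle this)
  have hdesc : ∀ j ∈ J, len n (τhat * simpleRefl n j) < len n τhat := by
    intro j hj
    have hmem : τhat * simpleRefl n j ∈
        {x | ∃ v ∈ Subgroup.closure (simpleRefl n '' J), x = τ * v} :=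
      ⟨v₀ * simpleRefl n j, Subgroup.mul_mem _ hv₀ (Subgroup.subset_closure ⟨j, hj, rfl⟩),
        by rw [hτhat, mul_assoc]⟩
    have hle := dle_len_le (bruhatLE_imp_dle (hτ.2 _ hmem))
    rcases simpleRefl_dichotomy (hJ j hj).1 (hJ j hj).2 τhat with ⟨hl, _⟩ | ⟨hl, _⟩ <;> omega
  have habsorbL : ∀ j ∈ J, ∀ x : Equiv.Perm (Fin n),
      dle x τhat⁻¹ → dle (simpleRefl n j * x) τhat⁻¹ := by
    intro j hj x hx
    have hxi : dle x⁻¹ τhat := by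
      have := dle_inv hx
      rwa [inv_inv] at this
    have hlen2 : len n (τhat * simpleRefl n j) < len n τhat := hdesc j hj
    have h1 := dle_absorb' (hJ j hj).1 (hJ j hj).2 hxi hlen2
    have h2 := dle_inv h1
    rwa [mul_inv_rev, simpleRefl_inv, inv_inv] at h2
  have hA1 : ∀ a ∈ Subgroup.closure (simpleRefl n '' J), ∀ u : Equiv.Perm (Fin n),
      dle u τ⁻¹ → dle (a * u) τhat⁻¹ := by
    intro a ha u hu
    obtain ⟨l, hlJ, rfl⟩ := mem_closure_iff_word.mp ha
    induction l with
    | nil => rw [wordProd_nil, one_mul]; exact dle_trans hu hττ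
    | cons j l ih =>
      rw [wordProd_cons, mul_assoc]
      apply habsorbL j (hlJ j List.mem_cons_self)
      exact ih (fun i hi => hlJ i (List.mem_cons_of_mem j hi))
        (mem_closure_iff_word.mpr ⟨l, fun i hi => hlJ i (List.mem_cons_of_mem j hi), rfl⟩)
  have hgreat : IsBruhatGreatest n
      {x | ∃ u v, bruhatLE n u mJ ∧ bruhatLE n v τ⁻¹ ∧ x = u * v} τhat⁻¹ := by
    constructor
    · refine ⟨v₀⁻¹, τ⁻¹, ?_, dle_imp_bruhatLE (dle_refl _), ?_⟩
      · exact dle_imp_bruhatLE (hmJ_up _ (Subgroup.inv_mem _ hv₀))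
      · rw [hτhat, mul_inv_rev]
    · rintro x ⟨u, v, hu, hv, rfl⟩
      exact dle_imp_bruhatLE (hA1 u (hmJ_down u (bruhatLE_imp_dle hu)) v (bruhatLE_imp_dle hv))
  have hτD : τhat⁻¹ = demMul n mJ τ⁻¹ := greatest_unique hgreat (demMul_spec mJ τ⁻¹)
  have hA2 : ∀ d : Equiv.Perm (Fin n), dle d τhat⁻¹ →
      ∃ a ∈ Subgroup.closure (simpleRefl n '' J), ∃ u, bruhatLE n u τ⁻¹ ∧ d = a * u := by
    intro d hd
    rw [hτD] at hd
    obtain ⟨u, v, hu, hv, rfl⟩ := demMul_down mJ τ⁻¹ hd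
    exact ⟨u, hmJ_down u (bruhatLE_imp_dle hu), v, hv, rfl⟩
  have hf6 : ∀ b ∈ Subgroup.closure (simpleRefl n '' K),
      dle (φ * b * w0 n) (φtil * w0 n) := by
    intro b hb
    exact dle_w0 (bruhatLE_imp_dle (hφ.2 (φ * b) ⟨b, hb, rfl⟩))
  constructor
  · -- membership
    obtain ⟨d, hdle, hGd⟩ := demMul_left_decomp τhat⁻¹ (φtil * w0 n)
    obtain ⟨a, haJ, u, huτ, hdau⟩ := hA2 d hdle
    refine ⟨a, haJ, u, huτ, b₀, hb₀, ?_⟩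
    rw [hGd, hdau, hφtil]
    have hw : ∀ g h : Equiv.Perm (Fin n), g * (h * w0 n) * w0 n = g * h := by
      intro g h
      rw [mul_assoc g (h * w0 n) (w0 n), mul_assoc h (w0 n) (w0 n), w0_mul_w0, mul_one]
    rw [hw]
    rw [← mul_assoc]
  · rintro x ⟨a, haJ, u, huτ, b, hbK, rfl⟩
    have d1 : dle (a * u) τhat⁻¹ := hA1 a haJ u (bruhatLE_imp_dle huτ)
    have d2 : dle (φ * b * w0 n) (φtil * w0 n) := hf6 b hbK
    have hxw : a * u * φ * b * w0 n = (a * u) * (φ * b * w0 n) := by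
      rw [mul_assoc (a * u) φ b, mul_assoc (a * u) (φ * b) (w0 n)]
    have hmemPS : a * u * φ * b * w0 n ∈
        {x | ∃ u' v', bruhatLE n u' τhat⁻¹ ∧ bruhatLE n v' (φtil * w0 n) ∧ x = u' * v'} :=
      ⟨a * u, φ * b * w0 n, dle_imp_bruhatLE d1, dle_imp_bruhatLE d2, hxw⟩
    have hle := bruhatLE_imp_dle ((demMul_spec τhat⁻¹ (φtil * w0 n)).2 _ hmemPS)
    have h2 := dle_w0 hle
    rw [mul_assoc (a * u * φ * b) (w0 n) (w0 n), w0_mul_w0, mul_one] at h2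
    exact dle_imp_bruhatLE h2

end KK
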